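/- arXiv:1612.00332 — 5 statements merged into one kernel-verified Lean document; each statement's English description precedes it below -/
import Mathlib

section
/- The Nitsche energy defines a norm uniformly in N: for every γ > 1/2 there exists c > 0 such that for every integer N ≥ 1, every real polynomial ψ of degree at most N with ψ(−1) = 0, and every z ∈ L²(−1,1), one has (1/2)∫_{-1}^{1} z(x)² dx + (1/2)∫_{-1}^{1} ψ'(x)² dx − ψ'(1)ψ(1) + (γ/2)N²ψ(1)² ≥ c·( ∫_{-1}^{1} z(x)² dx + ∫_{-1}^{1} ψ'(x)² dx ). -/
open Polynomial MeasureTheory intervalIntegral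

section NitscheAux

noncomputable def legP (n : ℕ) : Polynomial ℝ := derivative^[n] (((X:Polynomial ℝ)^2 - 1)^n)


lemma fsplit (n : ℕ) : (((X:Polynomial ℝ)^2 - 1)^n) = (X - C 1)^n * (X - C (-1))^n := by
  rw [← mul_pow]; congr 1; simp; ring

-- boundary vanishing
lemma vanish_one (n k : ℕ) (hk : k < n) :
    (derivative^[k] (((X:Polynomial ℝ)^2 - 1)^n)).eval 1 = 0 := by
  rw [fsplit, iterate_derivative_mul]
  rw [eval_finset_sum]
  apply Finset.sum_eq_zero
  intro i hi
  have hi' : i ≤ k := Nat.lt_succ_iff.mp (Finset.mem_range.mp hi)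
  rw [iterate_derivative_X_sub_pow]
  have h1 : n - (k - i) ≠ 0 := Nat.sub_ne_zero_of_lt (lt_of_le_of_lt (Nat.sub_le _ _) hk)
  simp [zero_pow h1]

lemma vanish_neg_one (n k : ℕ) (hk : k < n) :
    (derivative^[k] (((X:Polynomial ℝ)^2 - 1)^n)).eval (-1) = 0 := by
  rw [fsplit, iterate_derivative_mul]
  rw [eval_finset_sum]
  apply Finset.sum_eq_zero
  intro i hi
  have hi' : i ≤ k := Nat.lt_succ_iff.mp (Finset.mem_range.mp hi)
  rw [iterate_derivative_X_sub_pow n i (-1 : ℝ)]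
  have h1 : n - i ≠ 0 := Nat.sub_ne_zero_of_lt (lt_of_le_of_lt hi' hk)
  simp [zero_pow h1]

lemma poly_intable (p : Polynomial ℝ) (a b : ℝ) :
    IntervalIntegrable (fun x => p.eval x) volume a b :=
  p.continuous.intervalIntegrable a b

lemma poly_ibp (p q : Polynomial ℝ) :
    ∫ x in (-1:ℝ)..1, (derivative p).eval x * q.eval x
      = p.eval 1 * q.eval 1 - p.eval (-1) * q.eval (-1)
        - ∫ x in (-1:ℝ)..1, p.eval x * (derivative q).eval x := by
  have h := integral_mul_deriv_eq_deriv_mul_of_hasDerivAt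
    (u := fun x => q.eval x) (v := fun x => p.eval x)
    (u' := fun x => (derivative q).eval x) (v' := fun x => (derivative p).eval x)
    (a := (-1:ℝ)) (b := 1)
    (q.continuous.continuousOn) (p.continuous.continuousOn)
    (fun x _ => q.hasDerivAt x) (fun x _ => p.hasDerivAt x)
    (poly_intable _ _ _) (poly_intable _ _ _)
  have e1 : ∀ f g : Polynomial ℝ, (∫ x in (-1:ℝ)..1, f.eval x * g.eval x)
      = ∫ x in (-1:ℝ)..1, g.eval x * f.eval x := by
    intro f g; congr 1; ext x; ring
  rw [e1 (derivative p) q, h, e1 p (derivative q)]; ring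

lemma poly_ftc (p : Polynomial ℝ) :
    ∫ x in (-1:ℝ)..1, (derivative p).eval x = p.eval 1 - p.eval (-1) := by
  have := poly_ibp p 1
  simpa using this



lemma iter_ibp (n : ℕ) (k : ℕ) (hk : k ≤ n) (q : Polynomial ℝ) :
    ∫ x in (-1:ℝ)..1, (legP n).eval x * q.eval x
      = (-1)^k * ∫ x in (-1:ℝ)..1,
          (derivative^[n-k] (((X:Polynomial ℝ)^2 - 1)^n)).eval x * (derivative^[k] q).eval x := by
  induction k with
  | zero => simp [legP]
  | succ k ih =>
    have hk' : k ≤ n := Nat.le_of_succ_le hk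
    rw [ih hk']
    have hnk : n - k = (n - (k+1)) + 1 := by omega
    have hlt : n - (k+1) < n := by omega
    rw [hnk, Function.iterate_succ_apply']
    rw [poly_ibp]
    rw [vanish_one n _ hlt, vanish_neg_one n _ hlt]
    rw [← Function.iterate_succ_apply' derivative k q]
    ring



lemma f_monic (n : ℕ) : (((X:Polynomial ℝ)^2 - 1)^n).Monic := by
  have : ((X:Polynomial ℝ)^2 - 1) = X^2 - C 1 := by simp
  rw [this]
  exact (monic_X_pow_sub_C (1:ℝ) two_ne_zero).pow n

lemma f_natDegree (n : ℕ) : (((X:Polynomial ℝ)^2 - 1)^n).natDegree = 2*n := by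
  have : ((X:Polynomial ℝ)^2 - 1) = X^2 - C 1 := by simp
  rw [this, Monic.natDegree_pow (monic_X_pow_sub_C (1:ℝ) two_ne_zero), natDegree_X_pow_sub_C]
  ring

lemma legP_natDegree (n : ℕ) : (legP n).natDegree ≤ n := by
  have := natDegree_iterate_derivative (((X:Polynomial ℝ)^2 - 1)^n) n
  rw [f_natDegree] at this
  simpa [legP, two_mul] using this

lemma legP_coeff (n : ℕ) : (legP n).coeff n = ((2*n).descFactorial n : ℝ) := by
  rw [legP, coeff_iterate_derivative]
  have h1 : (((X:Polynomial ℝ)^2 - 1)^n).coeff (n + n) = 1 := by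
    have := (f_monic n).leadingCoeff
    rwa [leadingCoeff, f_natDegree, two_mul] at this
  rw [h1]
  simp [two_mul]

lemma legP_orth {m n : ℕ} (h : m < n) :
    ∫ x in (-1:ℝ)..1, (legP n).eval x * (legP m).eval x = 0 := by
  rw [iter_ibp n n le_rfl (legP m)]
  have : derivative^[n] (legP m) = 0 :=
    iterate_derivative_eq_zero (lt_of_le_of_lt (legP_natDegree m) h)
  simp [this]

lemma iterate_derivative_f_self (n : ℕ) :
    derivative^[2*n] (((X:Polynomial ℝ)^2 - 1)^n) = C (((2*n).factorial : ℝ)) := by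
  have hdeg : (derivative^[2*n] (((X:Polynomial ℝ)^2 - 1)^n)).natDegree = 0 := by
    have := natDegree_iterate_derivative (((X:Polynomial ℝ)^2 - 1)^n) (2*n)
    rw [f_natDegree] at this
    omega
  rw [eq_C_of_natDegree_le_zero hdeg.le]
  congr 1
  rw [coeff_iterate_derivative]
  have h1 : (((X:Polynomial ℝ)^2 - 1)^n).coeff (0 + 2*n) = 1 := by
    have := (f_monic n).leadingCoeff
    rw [leadingCoeff, f_natDegree] at this
    rw [zero_add]; exact this
  rw [h1]
  simp [Nat.descFactorial_self]

lemma legP_norm (n : ℕ) :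
    ∫ x in (-1:ℝ)..1, (legP n).eval x * (legP n).eval x
      = ((2*n).factorial : ℝ) * ∫ x in (-1:ℝ)..1, (1 - x^2)^n := by
  rw [iter_ibp n n le_rfl (legP n)]
  have h2 : derivative^[n] (legP n) = C (((2*n).factorial : ℝ)) := by
    rw [legP, ← Function.iterate_add_apply, ← two_mul, iterate_derivative_f_self]
  rw [Nat.sub_self, h2]
  simp only [Function.iterate_zero_apply, eval_C]
  rw [← intervalIntegral.integral_const_mul, ← intervalIntegral.integral_const_mul]
  apply intervalIntegral.integral_congr
  intro x _
  have h4 : eval x (((X:Polynomial ℝ)^2 - 1)^n) = (x^2-1)^n := by simp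
  have h3 : ((-1:ℝ))^n * (x^2-1)^n = (1-x^2)^n := by rw [← mul_pow]; norm_num
  simp only [h4]
  linear_combination ((2*n).factorial:ℝ) * h3

lemma w_intable (k : ℕ) : IntervalIntegrable (fun x:ℝ => (1-x^2)^k) volume (-1) 1 := by
  apply Continuous.intervalIntegrable; fun_prop

lemma g_deriv (m : ℕ) :
    derivative ((X:Polynomial ℝ) * (1 - X^2)^(m+1))
      = (2*(m:Polynomial ℝ)+3) * (1-X^2)^(m+1) - (2*(m:Polynomial ℝ)+2) * (1-X^2)^m := by
  rw [derivative_mul, derivative_X, derivative_pow]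
  simp only [derivative_sub, derivative_one, derivative_X_pow, Nat.add_sub_cancel, C_eq_natCast]
  push_cast
  ring

lemma wallis_rec (m : ℕ) :
    (2*(m:ℝ)+3) * ∫ x in (-1:ℝ)..1, (1-x^2)^(m+1)
      = (2*(m:ℝ)+2) * ∫ x in (-1:ℝ)..1, (1-x^2)^m := by
  have h := poly_ftc ((X:Polynomial ℝ) * (1 - X^2)^(m+1))
  rw [g_deriv] at h
  have hL : ∫ x in (-1:ℝ)..1, ((2*(m:Polynomial ℝ)+3) * (1-X^2)^(m+1)
      - (2*(m:Polynomial ℝ)+2) * ((1:Polynomial ℝ)-X^2)^m).eval x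
      = (2*(m:ℝ)+3) * (∫ x in (-1:ℝ)..1, (1-x^2)^(m+1))
        - (2*(m:ℝ)+2) * ∫ x in (-1:ℝ)..1, (1-x^2)^m := by
    rw [← intervalIntegral.integral_const_mul, ← intervalIntegral.integral_const_mul,
      ← intervalIntegral.integral_sub ((w_intable (m+1)).const_mul _) ((w_intable m).const_mul _)]
    apply intervalIntegral.integral_congr
    intro x _
    simp

  rw [hL] at h
  have hR : eval 1 ((X:Polynomial ℝ) * (1 - X^2)^(m+1))
      - eval (-1) ((X:Polynomial ℝ) * (1 - X^2)^(m+1)) = 0 := by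
    simp
  rw [hR] at h
  linarith

lemma wallis (n : ℕ) :
    ∫ x in (-1:ℝ)..1, (1-x^2)^n
      = 2^(2*n+1) * ((n.factorial:ℝ))^2 / ((2*n+1).factorial : ℝ) := by
  induction n with
  | zero => norm_num
  | succ m ih =>
    have h := wallis_rec m
    rw [ih] at h
    have h23 : (2*(m:ℝ)+3) ≠ 0 := by positivity
    have hfmpos : (0:ℝ) < ((2*m+1).factorial : ℝ) := by positivity
    have hf1 : (((m+1).factorial : ℕ) : ℝ) = ((m:ℝ)+1) * (m.factorial : ℝ) := by
      rw [Nat.factorial_succ]; push_cast; ring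
    have hf2 : (((2*(m+1)+1).factorial : ℕ) : ℝ)
        = (2*(m:ℝ)+3) * ((2*(m:ℝ)+2) * ((2*m+1).factorial : ℝ)) := by
      have e : 2*(m+1)+1 = ((2*m+1)+1)+1 := by ring
      rw [e, Nat.factorial_succ, Nat.factorial_succ]; push_cast; ring
    rw [hf1, hf2]
    field_simp at h
    have hD : (2*(m:ℝ)+3) * ((2*(m:ℝ)+2) * ((2*m+1).factorial : ℝ)) ≠ 0 := by positivity
    rw [eq_div_iff hD]
    linear_combination (2*(m:ℝ)+2) * h



lemma legP_one (n : ℕ) : (legP n).eval 1 = 2^n * (n.factorial : ℝ) := by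
  rw [legP, fsplit, iterate_derivative_mul, eval_finset_sum]
  rw [Finset.sum_eq_single 0]
  · simp only [Nat.sub_zero, Function.iterate_zero_apply, Nat.choose_zero_right, one_smul,
      iterate_derivative_X_sub_pow_self]
    simp
    ring
  · intro i hi hne
    have hin : i ≤ n := Nat.lt_succ_iff.mp (Finset.mem_range.mp hi)
    rw [iterate_derivative_X_sub_pow]
    have he : n - (n - i) = i := by omega
    rw [he]
    simp [zero_pow hne]
  · simp

lemma legP_zero : legP 0 = 1 := by simp [legP]

lemma legP_span (d : ℕ) : ∀ p : Polynomial ℝ, p.degree ≤ (d:ℕ) →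
    ∃ a : ℕ → ℝ, p = ∑ k ∈ Finset.range (d+1), C (a k) * legP k := by
  induction d with
  | zero =>
    intro p hp
    refine ⟨fun _ => p.coeff 0, ?_⟩
    rw [Finset.sum_range_one, legP_zero, mul_one]
    exact eq_C_of_degree_le_zero hp
  | succ d ih =>
    intro p hp
    set c : ℝ := p.coeff (d+1) / (legP (d+1)).coeff (d+1) with hc
    have hlc : (legP (d+1)).coeff (d+1) ≠ 0 := by
      rw [legP_coeff]
      have h0 : (2*(d+1)).descFactorial (d+1) ≠ 0 := by
        rw [Ne, Nat.descFactorial_eq_zero_iff_lt]; omega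
      exact_mod_cast h0
    have hq : (p - C c * legP (d+1)).degree ≤ (d:ℕ) := by
      rw [degree_le_iff_coeff_zero]
      intro m hm
      have hdm : d < m := by exact_mod_cast hm
      rcases eq_or_lt_of_le (Nat.succ_le_of_lt hdm) with h | h
      · rw [coeff_sub, coeff_C_mul, ← h, hc, div_mul_cancel₀ _ hlc, sub_self]
      · rw [coeff_sub, coeff_C_mul]
        rw [coeff_eq_zero_of_degree_lt (lt_of_le_of_lt hp (by exact_mod_cast h)),
          coeff_eq_zero_of_natDegree_lt (lt_of_le_of_lt (legP_natDegree (d+1)) h)]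
        ring
    obtain ⟨a, ha⟩ := ih _ hq
    refine ⟨Function.update a (d+1) c, ?_⟩
    rw [Finset.sum_range_succ, Function.update_self]
    have : ∑ k ∈ Finset.range (d+1), C (Function.update a (d+1) c k) * legP k
        = ∑ k ∈ Finset.range (d+1), C (a k) * legP k := by
      apply Finset.sum_congr rfl
      intro k hk
      rw [Function.update_of_ne (Nat.ne_of_lt (Finset.mem_range.mp hk))]
    rw [this, ← ha]
    ring



lemma legP_orth' {j k : ℕ} (h : j ≠ k) :
    ∫ x in (-1:ℝ)..1, (legP j).eval x * (legP k).eval x = 0 := by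
  rcases h.lt_or_gt with h | h
  · rw [← legP_orth h]
    apply intervalIntegral.integral_congr; intro x _; exact mul_comm _ _
  · exact legP_orth h

lemma legP_norm_val (n : ℕ) :
    ∫ x in (-1:ℝ)..1, (legP n).eval x * (legP n).eval x
      = (2^n * (n.factorial : ℝ))^2 * (2/(2*(n:ℝ)+1)) := by
  rw [legP_norm, wallis]
  have hf : (((2*n+1).factorial : ℕ) : ℝ) = (2*(n:ℝ)+1) * ((2*n).factorial : ℝ) := by
    rw [Nat.factorial_succ]; push_cast; ring
  rw [hf]
  have h1 : (2*(n:ℝ)+1) ≠ 0 := by positivity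
  have h2 : ((2*n).factorial : ℝ) ≠ 0 := by positivity
  field_simp
  ring

lemma sum_odd (n : ℕ) : ∑ k ∈ Finset.range n, ((2*(k:ℝ)+1)/2) = (n:ℝ)^2/2 := by
  induction n with
  | zero => simp
  | succ m ih => rw [Finset.sum_range_succ, ih]; push_cast; ring

lemma trace_ineq (d : ℕ) (p : Polynomial ℝ) (hp : p.degree ≤ (d:ℕ)) :
    (p.eval 1)^2 ≤ (((d:ℝ)+1)^2/2) * ∫ x in (-1:ℝ)..1, (p.eval x)^2 := by
  obtain ⟨a, ha⟩ := legP_span d p hp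
  set s := Finset.range (d+1) with hs
  -- expansion of the integral
  have hI : (∫ x in (-1:ℝ)..1, (p.eval x)^2)
      = ∑ k ∈ s, (a k)^2 * ((2^k * (k.factorial : ℝ))^2 * (2/(2*(k:ℝ)+1))) := by
    have hpt : ∀ x : ℝ, (p.eval x)^2
        = ∑ j ∈ s, ∑ k ∈ s, (a j * a k) * ((legP j).eval x * (legP k).eval x) := by
      intro x
      rw [sq, ha, eval_finset_sum, Finset.sum_mul_sum]
      apply Finset.sum_congr rfl; intro j _
      apply Finset.sum_congr rfl; intro k _
      simp only [eval_mul, eval_C]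
      ring
    rw [intervalIntegral.integral_congr (fun x _ => hpt x)]
    rw [intervalIntegral.integral_finset_sum]
    swap
    · intro j _
      exact (continuous_finset_sum s (fun k _ => (continuous_const.mul
        ((legP j).continuous.mul (legP k).continuous)))).intervalIntegrable _ _
    have hsw : ∀ j ∈ s, (∫ x in (-1:ℝ)..1, ∑ k ∈ s,
          (a j * a k) * ((legP j).eval x * (legP k).eval x))
        = (a j)^2 * ((2^j * (j.factorial : ℝ))^2 * (2/(2*(j:ℝ)+1))) := by
      intro j _
      rw [intervalIntegral.integral_finset_sum]
      swap
      · intro k _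
        exact (continuous_const.mul
          ((legP j).continuous.mul (legP k).continuous)).intervalIntegrable _ _
      rw [Finset.sum_eq_single j]
      · rw [intervalIntegral.integral_const_mul, legP_norm_val]; ring
      · intro k _ hk
        rw [intervalIntegral.integral_const_mul, legP_orth' (Ne.symm hk), mul_zero]
      · intro hj; exact absurd ‹j ∈ s› hj
    exact Finset.sum_congr rfl hsw
  -- value at 1
  have hv : p.eval 1 = ∑ k ∈ s, a k * (2^k * (k.factorial : ℝ)) := by
    rw [ha, eval_finset_sum]
    apply Finset.sum_congr rfl; intro k _
    rw [eval_mul, eval_C, legP_one]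
  -- Cauchy-Schwarz
  set f : ℕ → ℝ := fun k => a k * (2^k * (k.factorial : ℝ)) * Real.sqrt (2/(2*(k:ℝ)+1))
  set g : ℕ → ℝ := fun k => Real.sqrt ((2*(k:ℝ)+1)/2)
  have hfg : ∀ k, f k * g k = a k * (2^k * (k.factorial : ℝ)) := by
    intro k
    have h1 : (0:ℝ) < 2/(2*(k:ℝ)+1) := by positivity
    have h2 : (0:ℝ) < (2*(k:ℝ)+1)/2 := by positivity
    have : Real.sqrt (2/(2*(k:ℝ)+1)) * Real.sqrt ((2*(k:ℝ)+1)/2) = 1 := by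
      rw [← Real.sqrt_mul h1.le]
      rw [show (2/(2*(k:ℝ)+1)) * ((2*(k:ℝ)+1)/2) = 1 by field_simp]
      exact Real.sqrt_one
    calc f k * g k = a k * (2^k * (k.factorial : ℝ))
          * (Real.sqrt (2/(2*(k:ℝ)+1)) * Real.sqrt ((2*(k:ℝ)+1)/2)) := by ring
      _ = _ := by rw [this, mul_one]
  have hf2 : ∀ k, (f k)^2 = (a k)^2 * ((2^k * (k.factorial : ℝ))^2 * (2/(2*(k:ℝ)+1))) := by
    intro k
    have h1 : (0:ℝ) ≤ 2/(2*(k:ℝ)+1) := by positivity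
    simp only [f, mul_pow, Real.sq_sqrt h1]
    ring
  have hg2 : ∀ k, (g k)^2 = (2*(k:ℝ)+1)/2 := by
    intro k
    have h2 : (0:ℝ) ≤ (2*(k:ℝ)+1)/2 := by positivity
    simp only [g, Real.sq_sqrt h2]
  have hcs := Finset.sum_mul_sq_le_sq_mul_sq s f g
  rw [Finset.sum_congr rfl (fun k _ => hfg k), Finset.sum_congr rfl (fun k _ => hf2 k),
    Finset.sum_congr rfl (fun k _ => hg2 k)] at hcs
  rw [hv, hI]
  rw [hs] at hcs ⊢
  rw [sum_odd (d+1)] at hcs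
  push_cast at hcs ⊢
  linarith [hcs]

end NitscheAux

/-- The Nitsche energy defines a norm, uniformly in `N`: for every `γ > 1/2`
there is `c > 0` such that for every `N ≥ 1`, every polynomial `ψ` of degree at
most `N` with `ψ(−1) = 0`, and every `z ∈ L²(−1,1)`,
`E_{N,γ}(ψ,z) ≥ c·(∫z² + ∫ψ'²)`. -/
theorem nitsche_energy_uniform_norm :
    ∀ γ : ℝ, 1 / 2 < γ → ∃ c > 0, ∀ N : ℕ, 1 ≤ N →
      ∀ ψ : Polynomial ℝ, ψ.degree ≤ N → ψ.eval (-1) = 0 →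
        ∀ z : ℝ → ℝ, MemLp z 2 (volume.restrict (Set.Ioo (-1 : ℝ) 1)) →
          (1 / 2) * (∫ x in (-1 : ℝ)..1, (z x) ^ 2)
              + (1 / 2) * (∫ x in (-1 : ℝ)..1, (ψ.derivative.eval x) ^ 2)
              - ψ.derivative.eval 1 * ψ.eval 1 + (γ / 2) * (N : ℝ) ^ 2 * (ψ.eval 1) ^ 2
            ≥ c * ((∫ x in (-1 : ℝ)..1, (z x) ^ 2)
                + ∫ x in (-1 : ℝ)..1, (ψ.derivative.eval x) ^ 2) := by
  intro γ hγ
  have hγ0 : (0:ℝ) < γ := by linarith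
  refine ⟨(2*γ-1)/(4*γ), div_pos (by linarith) (by linarith), ?_⟩
  intro N hN ψ hdeg _ z _
  set Iz := ∫ x in (-1:ℝ)..1, (z x)^2 with hIzdef
  set Ip := ∫ x in (-1:ℝ)..1, (ψ.derivative.eval x)^2 with hIpdef
  set t := ψ.derivative.eval 1 with htdef
  set s1 := ψ.eval 1 with hs1def
  have hIz : 0 ≤ Iz := intervalIntegral.integral_nonneg (by norm_num) (fun u _ => sq_nonneg _)
  have hIp : 0 ≤ Ip := intervalIntegral.integral_nonneg (by norm_num) (fun u _ => sq_nonneg _)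
  -- degree of the derivative
  have hdeg' : ψ.derivative.degree ≤ ((N-1 : ℕ) : WithBot ℕ) := by
    have h1 : ψ.natDegree ≤ N := natDegree_le_iff_degree_le.mpr hdeg
    have h2 : ψ.derivative.natDegree ≤ N - 1 :=
      le_trans (natDegree_derivative_le ψ) (Nat.sub_le_sub_right h1 1)
    exact le_trans degree_le_natDegree (by exact_mod_cast h2)
  have htr := trace_ineq (N-1) ψ.derivative hdeg'
  have hcast : ((N-1 : ℕ) : ℝ) + 1 = (N : ℝ) := by
    have := Nat.cast_sub hN (R := ℝ)
    rw [this]; ring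
  rw [hcast] at htr
  have hT : t^2 ≤ ((N:ℝ)^2/2) * Ip := htr
  have hN1 : (1:ℝ) ≤ (N:ℝ) := by exact_mod_cast hN
  have hNpos : (0:ℝ) < (N:ℝ) := by linarith
  have hpos : (0:ℝ) < 4*γ*(N:ℝ)^2 := by positivity
  have key : 4*γ*(N:ℝ)^2 * ((1/2)*Iz + (1/2)*Ip - t*s1 + (γ/2)*(N:ℝ)^2*s1^2
        - (2*γ-1)/(4*γ)*(Iz+Ip))
      = (N:ℝ)^2*Iz + ((N:ℝ)^2*Ip - 2*t^2) + 2*(t - γ*(N:ℝ)^2*s1)^2 := by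
    field_simp
    ring
  have hR : 0 ≤ (N:ℝ)^2*Iz + ((N:ℝ)^2*Ip - 2*t^2) + 2*(t - γ*(N:ℝ)^2*s1)^2 := by
    have r1 : 0 ≤ (N:ℝ)^2*Iz := mul_nonneg (sq_nonneg _) hIz
    have r2 : 0 ≤ (N:ℝ)^2*Ip - 2*t^2 := by nlinarith [hT]
    nlinarith [sq_nonneg (t - γ*(N:ℝ)^2*s1)]
  have h0 : 0 ≤ 4*γ*(N:ℝ)^2 * ((1/2)*Iz + (1/2)*Ip - t*s1 + (γ/2)*(N:ℝ)^2*s1^2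
        - (2*γ-1)/(4*γ)*(Iz+Ip)) := key ▸ hR
  nlinarith [h0, hpos, mul_pos hpos hpos]
end

section
/- Conservation of the Nitsche energy for the symmetric Nitsche semi-discretization: let γ > 0, N ≥ 1, and let t ↦ u(·,t) be a C² (in time) curve of real polynomials in x of degree at most N with u(−1,t) = 0, satisfying ∫_{-1}^{1} u_tt(x,t)ψ(x) dx + ∫_{-1}^{1} u_x(x,t)ψ'(x) dx − u_x(1,t)ψ(1) − u(1,t)ψ'(1) + γN²u(1,t)ψ(1) = 0 for every polynomial ψ of degree at most N with ψ(−1) = 0 and every t. Then the Nitsche energy E_{N,γ}(u(t)) = (1/2)∫_{-1}^{1}(u_t(x,t)² + u_x(x,t)²) dx + ((γ/2)N²u(1,t) − u_x(1,t))·u(1,t) is constant in t. -/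
open Polynomial MeasureTheory

theorem aux_int {n : ℕ} (P Q : Fin n → Polynomial ℝ) (r s : Fin n → ℝ) :
    (∫ x in (-1:ℝ)..1, (∑ j, r j * (P j).eval x) * (∑ k, s k * (Q k).eval x))
      = ∑ j, ∑ k, r j * s k * ∫ x in (-1:ℝ)..1, (P j).eval x * (Q k).eval x := by
  have h : ∀ x : ℝ, (∑ j, r j * (P j).eval x) * (∑ k, s k * (Q k).eval x)
      = ∑ j, ∑ k, r j * s k * ((P j).eval x * (Q k).eval x) := by
    intro x
    rw [Finset.sum_mul_sum]
    exact Finset.sum_congr rfl fun j _ => Finset.sum_congr rfl fun k _ => by ring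
  simp_rw [h]
  rw [intervalIntegral.integral_finset_sum]
  · refine Finset.sum_congr rfl fun j _ => ?_
    rw [intervalIntegral.integral_finset_sum]
    · exact Finset.sum_congr rfl fun k _ => intervalIntegral.integral_const_mul _ _
    · intro k _
      exact (continuous_const.mul ((P j).continuous.mul (Q k).continuous)).intervalIntegrable _ _
  · intro j _
    refine Continuous.intervalIntegrable ?_ _ _
    exact continuous_finset_sum _ fun k _ =>
      continuous_const.mul ((P j).continuous.mul (Q k).continuous)

/-- Conservation of the Nitsche energy for the symmetric Nitsche Legendre
semi-discretization: if `t ↦ u(·,t)` is a C² (in time) curve of polynomials of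
degree at most `N` vanishing at `x = −1` that satisfies the symmetric Nitsche
weak formulation for all test polynomials `ψ` of degree at most `N` with
`ψ(−1) = 0`, then the Nitsche energy
`E_{N,γ}(u(t)) = (1/2)∫(u_t² + u_x²) + ((γ/2)N²u(1,t) − u_x(1,t))·u(1,t)`
is constant in time. -/
theorem nitsche_energy_conservation
    (γ : ℝ) (hγ : 0 < γ) (N : ℕ) (hN : 1 ≤ N)
    (u ut utt : ℝ → ℝ → ℝ)
    -- for each t, u(·,t) is a polynomial of degree ≤ N vanishing at x = −1
    (hupoly : ∀ t : ℝ, ∃ p : Polynomial ℝ, p.degree ≤ N ∧ ∀ x : ℝ, u x t = p.eval x)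
    (hbc : ∀ t : ℝ, u (-1) t = 0)
    -- ut, utt are the first and second time derivatives of u (C² in time)
    (hut : ∀ x t : ℝ, HasDerivAt (fun τ => u x τ) (ut x t) t)
    (hutt : ∀ x t : ℝ, HasDerivAt (fun τ => ut x τ) (utt x t) t)
    -- the symmetric Nitsche weak formulation
    (hweak : ∀ ψ : Polynomial ℝ, ψ.degree ≤ N → ψ.eval (-1) = 0 → ∀ t : ℝ,
      (∫ x in (-1 : ℝ)..1, utt x t * ψ.eval x)
        + (∫ x in (-1 : ℝ)..1, deriv (fun ξ => u ξ t) x * ψ.derivative.eval x)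
        - deriv (fun ξ => u ξ t) 1 * ψ.eval 1
        - u 1 t * ψ.derivative.eval 1
        + γ * (N : ℝ) ^ 2 * u 1 t * ψ.eval 1 = 0) :
    ∀ s t : ℝ,
      (1 / 2) * (∫ x in (-1 : ℝ)..1, ((ut x t) ^ 2 + (deriv (fun ξ => u ξ t) x) ^ 2))
          + ((γ / 2) * (N : ℝ) ^ 2 * u 1 t - deriv (fun ξ => u ξ t) 1) * u 1 t
        = (1 / 2) * (∫ x in (-1 : ℝ)..1, ((ut x s) ^ 2 + (deriv (fun ξ => u ξ s) x) ^ 2))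
          + ((γ / 2) * (N : ℝ) ^ 2 * u 1 s - deriv (fun ξ => u ξ s) 1) * u 1 s := by
  classical
  set v : Fin (N+1) → ℝ := fun j => ((j : ℕ) : ℝ) with hvdef
  have hv : Set.InjOn v (Finset.univ : Finset (Fin (N+1))) := by
    intro i _ j _ h
    exact Fin.val_injective (Nat.cast_injective h)
  set L : Fin (N+1) → Polynomial ℝ := fun j => Lagrange.basis Finset.univ v j with hLdef
  -- representation of u in the Lagrange basis
  have hrepu : ∀ t x : ℝ, u x t = ∑ j, u (v j) t * (L j).eval x := by
    intro t x
    obtain ⟨p, hd, hp⟩ := hupoly t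
    have hlt : p.degree < ((Finset.univ : Finset (Fin (N+1))).card : WithBot ℕ) := by
      have hc : ((Finset.univ : Finset (Fin (N+1))).card : WithBot ℕ) = ((N+1 : ℕ) : WithBot ℕ) := by
        simp
      rw [hc]
      exact lt_of_le_of_lt hd (by exact_mod_cast Nat.lt_succ_self N)
    have hip := Lagrange.eq_interpolate hv hlt
    rw [hp x]
    conv_lhs => rw [hip]
    rw [Lagrange.interpolate_apply, Polynomial.eval_finset_sum]
    simp_rw [Polynomial.eval_mul, Polynomial.eval_C, hp]
    rfl
  -- representation of ut
  have hreput : ∀ x t : ℝ, ut x t = ∑ j, ut (v j) t * (L j).eval x := by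
    intro x t
    have h1 : HasDerivAt (fun τ => ∑ j, u (v j) τ * (L j).eval x)
        (∑ j, ut (v j) t * (L j).eval x) t :=
      HasDerivAt.fun_sum fun j _ => (hut (v j) t).mul_const _
    have h2 : (fun τ => u x τ) = fun τ => ∑ j, u (v j) τ * (L j).eval x :=
      funext fun τ => hrepu τ x
    exact (hut x t).unique (by rw [h2]; exact h1)
  -- representation of utt
  have hreputt : ∀ x t : ℝ, utt x t = ∑ j, utt (v j) t * (L j).eval x := by
    intro x t
    have h1 : HasDerivAt (fun τ => ∑ j, ut (v j) τ * (L j).eval x)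
        (∑ j, utt (v j) t * (L j).eval x) t :=
      HasDerivAt.fun_sum fun j _ => (hutt (v j) t).mul_const _
    have h2 : (fun τ => ut x τ) = fun τ => ∑ j, ut (v j) τ * (L j).eval x :=
      funext fun τ => hreput x τ
    exact (hutt x t).unique (by rw [h2]; exact h1)
  -- boundary condition for ut
  have hut0 : ∀ t : ℝ, ut (-1) t = 0 := by
    intro t
    have h0 : (fun τ => u (-1) τ) = fun _ => (0:ℝ) := funext fun τ => hbc τ
    have h1 := hut (-1) t
    rw [h0] at h1
    exact h1.unique (hasDerivAt_const t 0)
  -- degree bound for the basis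
  have hLdeg : ∀ j, (L j).degree ≤ (N : WithBot ℕ) := by
    intro j
    rw [hLdef]
    rw [Lagrange.degree_basis hv (Finset.mem_univ j)]
    simp
  -- spatial derivative of u
  have hux : ∀ t x : ℝ, deriv (fun ξ => u ξ t) x = ∑ j, u (v j) t * (L j).derivative.eval x := by
    intro t x
    have hfe : (fun ξ => u ξ t) = fun ξ => (∑ j, Polynomial.C (u (v j) t) * L j).eval ξ := by
      funext ξ
      rw [hrepu t ξ, Polynomial.eval_finset_sum]
      simp [Polynomial.eval_mul]
    rw [hfe, Polynomial.deriv, Polynomial.derivative_sum, Polynomial.eval_finset_sum]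
    simp [Polynomial.derivative_C_mul, Polynomial.eval_mul]
  -- Gram matrices and boundary vectors
  set M : Fin (N+1) → Fin (N+1) → ℝ :=
    fun j k => ∫ x in (-1:ℝ)..1, (L j).eval x * (L k).eval x with hMdef
  set S : Fin (N+1) → Fin (N+1) → ℝ :=
    fun j k => ∫ x in (-1:ℝ)..1, (L j).derivative.eval x * (L k).derivative.eval x with hSdef
  set ℓ : Fin (N+1) → ℝ := fun j => (L j).eval 1 with hldef
  set dd : Fin (N+1) → ℝ := fun j => (L j).derivative.eval 1 with hddef
  have hMsym : ∀ j k, M j k = M k j := by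
    intro j k
    exact intervalIntegral.integral_congr fun x _ => mul_comm _ _
  have hSsym : ∀ j k, S j k = S k j := by
    intro j k
    exact intervalIntegral.integral_congr fun x _ => mul_comm _ _
  -- the energy as a function of time
  set E : ℝ → ℝ := fun τ =>
    (1 / 2) * (∫ x in (-1 : ℝ)..1, ((ut x τ) ^ 2 + (deriv (fun ξ => u ξ τ) x) ^ 2))
      + ((γ / 2) * (N : ℝ) ^ 2 * u 1 τ - deriv (fun ξ => u ξ τ) 1) * u 1 τ with hEdef
  -- coordinate form of the energy
  have hEF : ∀ τ : ℝ, E τ =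
      (1 / 2) * ((∑ j, ∑ k, ut (v j) τ * ut (v k) τ * M j k)
        + (∑ j, ∑ k, u (v j) τ * u (v k) τ * S j k))
      + ((γ / 2) * (N : ℝ) ^ 2 * (∑ j, u (v j) τ * ℓ j) - (∑ j, u (v j) τ * dd j))
        * (∑ j, u (v j) τ * ℓ j) := by
    intro τ
    have h1 : ∀ x : ℝ, (ut x τ) ^ 2
        = (∑ j, ut (v j) τ * (L j).eval x) * (∑ k, ut (v k) τ * (L k).eval x) := by
      intro x; rw [← hreput]; ring
    have h2 : ∀ x : ℝ, (deriv (fun ξ => u ξ τ) x) ^ 2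
        = (∑ j, u (v j) τ * (L j).derivative.eval x)
          * (∑ k, u (v k) τ * (L k).derivative.eval x) := by
      intro x; rw [← hux]; ring
    have hi1 : IntervalIntegrable
        (fun x => (∑ j, ut (v j) τ * (L j).eval x) * (∑ k, ut (v k) τ * (L k).eval x))
        volume (-1:ℝ) 1 := by
      refine Continuous.intervalIntegrable ?_ _ _
      exact (continuous_finset_sum _ fun j _ => continuous_const.mul (L j).continuous).mul
        (continuous_finset_sum _ fun k _ => continuous_const.mul (L k).continuous)
    have hi2 : IntervalIntegrable
        (fun x => (∑ j, u (v j) τ * (L j).derivative.eval x)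
          * (∑ k, u (v k) τ * (L k).derivative.eval x)) volume (-1:ℝ) 1 := by
      refine Continuous.intervalIntegrable ?_ _ _
      exact (continuous_finset_sum _ fun j _ =>
          continuous_const.mul (L j).derivative.continuous).mul
        (continuous_finset_sum _ fun k _ => continuous_const.mul (L k).derivative.continuous)
    rw [hEdef]
    simp only [h1, h2]
    rw [intervalIntegral.integral_add hi1 hi2, aux_int L L, aux_int (fun j => (L j).derivative)
      (fun k => (L k).derivative), hrepu τ 1, hux τ 1]
  -- the energy has zero derivative everywhere
  have hE0 : ∀ t : ℝ, HasDerivAt E 0 t := by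
    intro t
    -- the test polynomial ψ = ut(·,t)
    set ψ : Polynomial ℝ := ∑ j, Polynomial.C (ut (v j) t) * L j with hψdef
    have hψeval : ∀ x : ℝ, ψ.eval x = ut x t := by
      intro x
      rw [hψdef, Polynomial.eval_finset_sum]
      simp_rw [Polynomial.eval_mul, Polynomial.eval_C]
      exact (hreput x t).symm
    have hψder : ∀ x : ℝ, ψ.derivative.eval x = ∑ k, ut (v k) t * (L k).derivative.eval x := by
      intro x
      rw [hψdef, Polynomial.derivative_sum, Polynomial.eval_finset_sum]
      simp [Polynomial.derivative_C_mul, Polynomial.eval_mul]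
    have hψdeg : ψ.degree ≤ (N : WithBot ℕ) := by
      refine (Polynomial.degree_sum_le _ _).trans ?_
      refine Finset.sup_le fun j _ => ?_
      calc (Polynomial.C (ut (v j) t) * L j).degree ≤ (L j).degree := by
            rw [← Polynomial.smul_eq_C_mul]; exact Polynomial.degree_smul_le _ _
        _ ≤ (N : WithBot ℕ) := hLdeg j
    have hψbc : ψ.eval (-1) = 0 := by rw [hψeval]; exact hut0 t
    have hw := hweak ψ hψdeg hψbc t
    -- rewrite the weak form in coordinates
    have hwI1 : (∫ x in (-1 : ℝ)..1, utt x t * ψ.eval x)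
        = ∑ j, ∑ k, utt (v j) t * ut (v k) t * M j k := by
      have h : ∀ x : ℝ, utt x t * ψ.eval x
          = (∑ j, utt (v j) t * (L j).eval x) * (∑ k, ut (v k) t * (L k).eval x) := by
        intro x; rw [hψeval, ← hreputt, ← hreput]
      simp only [h]
      exact aux_int L L _ _
    have hwI2 : (∫ x in (-1 : ℝ)..1, deriv (fun ξ => u ξ t) x * ψ.derivative.eval x)
        = ∑ j, ∑ k, u (v j) t * ut (v k) t * S j k := by
      have h : ∀ x : ℝ, deriv (fun ξ => u ξ t) x * ψ.derivative.eval x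
          = (∑ j, u (v j) t * (L j).derivative.eval x)
            * (∑ k, ut (v k) t * (L k).derivative.eval x) := by
        intro x; rw [hψder, ← hux]
      simp only [h]
      exact aux_int (fun j => (L j).derivative) (fun k => (L k).derivative) _ _
    rw [hwI1, hwI2, hux t 1, hψeval 1, hreput 1 t, hψder 1, hrepu t 1] at hw
    -- swap identities from symmetry of the Gram matrices
    have hswap1 : ∑ j, ∑ k, ut (v j) t * utt (v k) t * M j k
        = ∑ j, ∑ k, utt (v j) t * ut (v k) t * M j k := by
      rw [Finset.sum_comm]
      exact Finset.sum_congr rfl fun j _ => Finset.sum_congr rfl fun k _ => by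
        rw [hMsym k j]; ring
    have hswap2 : ∑ j, ∑ k, ut (v j) t * u (v k) t * S j k
        = ∑ j, ∑ k, u (v j) t * ut (v k) t * S j k := by
      rw [Finset.sum_comm]
      exact Finset.sum_congr rfl fun j _ => Finset.sum_congr rfl fun k _ => by
        rw [hSsym k j]; ring
    -- build the derivative of the coordinate form
    have hMM : HasDerivAt (fun τ => ∑ j, ∑ k, ut (v j) τ * ut (v k) τ * M j k)
        (∑ j, ∑ k, (utt (v j) t * ut (v k) t + ut (v j) t * utt (v k) t) * M j k) t :=
      HasDerivAt.fun_sum fun j _ => HasDerivAt.fun_sum fun k _ =>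
        ((hutt (v j) t).mul (hutt (v k) t)).mul_const _
    have hSS : HasDerivAt (fun τ => ∑ j, ∑ k, u (v j) τ * u (v k) τ * S j k)
        (∑ j, ∑ k, (ut (v j) t * u (v k) t + u (v j) t * ut (v k) t) * S j k) t :=
      HasDerivAt.fun_sum fun j _ => HasDerivAt.fun_sum fun k _ =>
        ((hut (v j) t).mul (hut (v k) t)).mul_const _
    have hA : HasDerivAt (fun τ => ∑ j, u (v j) τ * ℓ j) (∑ j, ut (v j) t * ℓ j) t :=
      HasDerivAt.fun_sum fun j _ => (hut (v j) t).mul_const _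
    have hB : HasDerivAt (fun τ => ∑ j, u (v j) τ * dd j) (∑ j, ut (v j) t * dd j) t :=
      HasDerivAt.fun_sum fun j _ => (hut (v j) t).mul_const _
    have hF : HasDerivAt (fun τ =>
        (1 / 2) * ((∑ j, ∑ k, ut (v j) τ * ut (v k) τ * M j k)
          + (∑ j, ∑ k, u (v j) τ * u (v k) τ * S j k))
        + ((γ / 2) * (N : ℝ) ^ 2 * (∑ j, u (v j) τ * ℓ j) - (∑ j, u (v j) τ * dd j))
          * (∑ j, u (v j) τ * ℓ j))
        ((1 / 2) * ((∑ j, ∑ k, (utt (v j) t * ut (v k) t + ut (v j) t * utt (v k) t) * M j k)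
          + (∑ j, ∑ k, (ut (v j) t * u (v k) t + u (v j) t * ut (v k) t) * S j k))
        + (((γ / 2) * (N : ℝ) ^ 2 * (∑ j, ut (v j) t * ℓ j) - (∑ j, ut (v j) t * dd j))
            * (∑ j, u (v j) t * ℓ j)
          + ((γ / 2) * (N : ℝ) ^ 2 * (∑ j, u (v j) t * ℓ j) - (∑ j, u (v j) t * dd j))
            * (∑ j, ut (v j) t * ℓ j))) t :=
      ((hMM.add hSS).const_mul _).add (((hA.const_mul ((γ / 2) * (N : ℝ) ^ 2)).sub hB).mul hA)
    -- the derivative value vanishes by the weak formulation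
    have hval : ((1 / 2) * ((∑ j, ∑ k, (utt (v j) t * ut (v k) t + ut (v j) t * utt (v k) t) * M j k)
          + (∑ j, ∑ k, (ut (v j) t * u (v k) t + u (v j) t * ut (v k) t) * S j k))
        + (((γ / 2) * (N : ℝ) ^ 2 * (∑ j, ut (v j) t * ℓ j) - (∑ j, ut (v j) t * dd j))
            * (∑ j, u (v j) t * ℓ j)
          + ((γ / 2) * (N : ℝ) ^ 2 * (∑ j, u (v j) t * ℓ j) - (∑ j, u (v j) t * dd j))
            * (∑ j, ut (v j) t * ℓ j))) = 0 := by
      have hexp1 : ∑ j, ∑ k, (utt (v j) t * ut (v k) t + ut (v j) t * utt (v k) t) * M j k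
          = (∑ j, ∑ k, utt (v j) t * ut (v k) t * M j k)
            + ∑ j, ∑ k, ut (v j) t * utt (v k) t * M j k := by
        simp_rw [add_mul, Finset.sum_add_distrib]
      have hexp2 : ∑ j, ∑ k, (ut (v j) t * u (v k) t + u (v j) t * ut (v k) t) * S j k
          = (∑ j, ∑ k, ut (v j) t * u (v k) t * S j k)
            + ∑ j, ∑ k, u (v j) t * ut (v k) t * S j k := by
        simp_rw [add_mul, Finset.sum_add_distrib]
      rw [hexp1, hexp2, hswap1, hswap2]
      linear_combination hw
    have hEfun : E = fun τ =>
        (1 / 2) * ((∑ j, ∑ k, ut (v j) τ * ut (v k) τ * M j k)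
          + (∑ j, ∑ k, u (v j) τ * u (v k) τ * S j k))
        + ((γ / 2) * (N : ℝ) ^ 2 * (∑ j, u (v j) τ * ℓ j) - (∑ j, u (v j) τ * dd j))
          * (∑ j, u (v j) τ * ℓ j) := funext hEF
    rw [hEfun]
    rw [← hval]
    exact hF
  intro s t
  have hdiff : Differentiable ℝ E := fun x => (hE0 x).differentiableAt
  exact is_const_of_deriv_eq_zero hdiff (fun x => (hE0 x).deriv) t s
end

section
/- Discrete duality identity for the symmetric Nitsche method: let γ > 0, N ≥ 1, T > 0, v ∈ C([0,T]), and let t ↦ u(·,t) and t ↦ y(·,t) be C² (in time) curves of real polynomials in x of degree at most N vanishing at x = −1 such that, for every polynomial ψ of degree at most N with ψ(−1) = 0 and every t ∈ [0,T]: (i) ∫_{-1}^{1} u_tt ψ dx + ∫_{-1}^{1} u_x ψ' dx − u_x(1,t)ψ(1) − u(1,t)ψ'(1) + γN²u(1,t)ψ(1) = 0; (ii) ∫_{-1}^{1} y_tt ψ dx + ∫_{-1}^{1} y_x ψ' dx − y_x(1,t)ψ(1) − y(1,t)ψ'(1) + γN²y(1,t)ψ(1) = v(t)·(−ψ'(1)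 + γN²ψ(1)); and (iii) y(·,T) = 0 and y_t(·,T) = 0. Then ∫_0^T v(t)·(−u_x(1,t) + γN²u(1,t)) dt = ∫_{-1}^{1} ( u_t(x,0)·y(x,0) − u(x,0)·y_t(x,0) ) dx. -/
open Polynomial MeasureTheory Set

/-- Discrete duality identity for the symmetric Nitsche method: if `u` solves
the symmetric Nitsche semi-discretization of the homogeneous wave equation and
`y` solves the one with Dirichlet datum `v(t)` at `x = 1` appended weakly, with
`y(·,T) = y_t(·,T) = 0`, then
`∫_0^T v(t)(−u_x(1,t) + γN²u(1,t)) dt = ∫_{-1}^1 (u_t(x,0)y(x,0) − u(x,0)y_t(x,0)) dx`. -/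
theorem nitsche_discrete_duality
    (γ : ℝ) (hγ : 0 < γ) (N : ℕ) (hN : 1 ≤ N) (T : ℝ) (hT : 0 < T)
    (v : ℝ → ℝ) (hv : ContinuousOn v (Set.Icc 0 T))
    (u ut utt y yt ytt : ℝ → ℝ → ℝ)
    -- for each t, u(·,t) and y(·,t) are polynomials of degree ≤ N vanishing at x = −1
    (hupoly : ∀ t ∈ Set.Icc (0 : ℝ) T,
      ∃ p : Polynomial ℝ, p.degree ≤ N ∧ p.eval (-1) = 0 ∧ ∀ x : ℝ, u x t = p.eval x)
    (hypoly : ∀ t ∈ Set.Icc (0 : ℝ) T,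
      ∃ p : Polynomial ℝ, p.degree ≤ N ∧ p.eval (-1) = 0 ∧ ∀ x : ℝ, y x t = p.eval x)
    -- ut, utt, yt, ytt are the time derivatives of u and y on [0,T] (C² in time)
    (hut : ∀ x : ℝ, ∀ t ∈ Set.Icc (0 : ℝ) T,
      HasDerivWithinAt (fun τ => u x τ) (ut x t) (Set.Icc (0 : ℝ) T) t)
    (hutt : ∀ x : ℝ, ∀ t ∈ Set.Icc (0 : ℝ) T,
      HasDerivWithinAt (fun τ => ut x τ) (utt x t) (Set.Icc (0 : ℝ) T) t)
    (hyt : ∀ x : ℝ, ∀ t ∈ Set.Icc (0 : ℝ) T,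
      HasDerivWithinAt (fun τ => y x τ) (yt x t) (Set.Icc (0 : ℝ) T) t)
    (hytt : ∀ x : ℝ, ∀ t ∈ Set.Icc (0 : ℝ) T,
      HasDerivWithinAt (fun τ => yt x τ) (ytt x t) (Set.Icc (0 : ℝ) T) t)
    -- (i) the symmetric Nitsche semi-discretization of the homogeneous wave equation
    (hweaku : ∀ ψ : Polynomial ℝ, ψ.degree ≤ N → ψ.eval (-1) = 0 →
      ∀ t ∈ Set.Icc (0 : ℝ) T,
      (∫ x in (-1 : ℝ)..1, utt x t * ψ.eval x)
        + (∫ x in (-1 : ℝ)..1, deriv (fun ξ => u ξ t) x * ψ.derivative.eval x)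
        - deriv (fun ξ => u ξ t) 1 * ψ.eval 1
        - u 1 t * ψ.derivative.eval 1
        + γ * (N : ℝ) ^ 2 * u 1 t * ψ.eval 1 = 0)
    -- (ii) the symmetric Nitsche semi-discretization with Dirichlet datum v at x = 1
    (hweaky : ∀ ψ : Polynomial ℝ, ψ.degree ≤ N → ψ.eval (-1) = 0 →
      ∀ t ∈ Set.Icc (0 : ℝ) T,
      (∫ x in (-1 : ℝ)..1, ytt x t * ψ.eval x)
        + (∫ x in (-1 : ℝ)..1, deriv (fun ξ => y ξ t) x * ψ.derivative.eval x)
        - deriv (fun ξ => y ξ t) 1 * ψ.eval 1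
        - y 1 t * ψ.derivative.eval 1
        + γ * (N : ℝ) ^ 2 * y 1 t * ψ.eval 1
        = v t * (-ψ.derivative.eval 1 + γ * (N : ℝ) ^ 2 * ψ.eval 1))
    -- (iii) final conditions for y
    (hyfinal : ∀ x : ℝ, y x T = 0 ∧ yt x T = 0) :
    (∫ t in (0 : ℝ)..T, v t * (-(deriv (fun ξ => u ξ t) 1) + γ * (N : ℝ) ^ 2 * u 1 t))
      = ∫ x in (-1 : ℝ)..1, (ut x 0 * y x 0 - u x 0 * yt x 0) := by
  classical
  have hIcc : UniqueDiffOn ℝ (Set.Icc (0:ℝ) T) := uniqueDiffOn_Icc hT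
  have h0T : (0:ℝ) ∈ Set.Icc (0:ℝ) T := ⟨le_refl _, hT.le⟩
  have hTT : T ∈ Set.Icc (0:ℝ) T := ⟨hT.le, le_refl _⟩
  set w : Fin (N+1) → ℝ := fun i => ((i : ℕ) : ℝ) with hwdef
  have hwinj : Set.InjOn w (Finset.univ : Finset (Fin (N+1))) := by
    intro i _ j _ hij
    exact Fin.ext (Nat.cast_injective hij)
  set L : Fin (N+1) → ℝ → ℝ := fun i x => (Lagrange.basis Finset.univ w i).eval x with hLdef
  have hLc : ∀ i, Continuous (L i) := by
    intro i; rw [hLdef]; exact Polynomial.continuous _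
  have hLd : ∀ i (x : ℝ), HasDerivAt (L i)
      ((Lagrange.basis Finset.univ w i).derivative.eval x) x := by
    intro i x; rw [hLdef]; exact Polynomial.hasDerivAt _ x
  -- nodal representation of polynomials of degree ≤ N
  have hrepP : ∀ (p : Polynomial ℝ), p.degree ≤ N → ∀ x : ℝ,
      p.eval x = ∑ i, p.eval (w i) * L i x := by
    intro p hp x
    have hdeg : p.degree < (Finset.univ : Finset (Fin (N+1))).card := by
      refine lt_of_le_of_lt hp ?_
      rw [Finset.card_univ, Fintype.card_fin]
      exact_mod_cast Nat.lt_succ_self N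
    conv_lhs => rw [Lagrange.eq_interpolate hwinj hdeg]
    simp [hLdef, Lagrange.interpolate_apply, Polynomial.eval_finset_sum]
  have hurep : ∀ t ∈ Set.Icc (0:ℝ) T, ∀ x, u x t = ∑ i, u (w i) t * L i x := by
    intro t ht x
    obtain ⟨p, hpd, -, hpe⟩ := hupoly t ht
    rw [hpe x, hrepP p hpd x]
    exact Finset.sum_congr rfl fun i _ => by rw [hpe (w i)]
  have hyrep : ∀ t ∈ Set.Icc (0:ℝ) T, ∀ x, y x t = ∑ i, y (w i) t * L i x := by
    intro t ht x
    obtain ⟨p, hpd, -, hpe⟩ := hypoly t ht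
    rw [hpe x, hrepP p hpd x]
    exact Finset.sum_congr rfl fun i _ => by rw [hpe (w i)]
  -- transfer of nodal representation to time derivatives
  have hDrep : ∀ (f ft : ℝ → ℝ → ℝ),
      (∀ x : ℝ, ∀ t ∈ Set.Icc (0:ℝ) T,
        HasDerivWithinAt (fun τ => f x τ) (ft x t) (Set.Icc (0:ℝ) T) t) →
      (∀ t ∈ Set.Icc (0:ℝ) T, ∀ x, f x t = ∑ i, f (w i) t * L i x) →
      ∀ t ∈ Set.Icc (0:ℝ) T, ∀ x, ft x t = ∑ i, ft (w i) t * L i x := by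
    intro f ft hft hrep t ht x
    have h1 : HasDerivWithinAt (fun τ => ∑ i, f (w i) τ * L i x)
        (∑ i, ft (w i) t * L i x) (Set.Icc (0:ℝ) T) t :=
      HasDerivWithinAt.fun_sum fun i _ => (hft (w i) t ht).mul_const _
    have h2 : HasDerivWithinAt (fun τ => f x τ)
        (∑ i, ft (w i) t * L i x) (Set.Icc (0:ℝ) T) t :=
      h1.congr (fun τ hτ => hrep τ hτ x) (hrep t ht x)
    exact ((hft x t ht).derivWithin (hIcc t ht)).symm.trans (h2.derivWithin (hIcc t ht))
  have hutrep := hDrep u ut hut hurep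
  have huttrep := hDrep ut utt hutt hutrep
  have hytrep := hDrep y yt hyt hyrep
  have hyttrep := hDrep yt ytt hytt hytrep
  -- mass matrix
  set m : Fin (N+1) → Fin (N+1) → ℝ := fun i j => ∫ x in (-1:ℝ)..1, L i x * L j x with hmdef
  have hexp : ∀ e : Fin (N+1) → Fin (N+1) → ℝ,
      (∫ x in (-1:ℝ)..1, ∑ i, ∑ j, e i j * (L i x * L j x))
        = ∑ i, ∑ j, e i j * m i j := by
    intro e
    rw [intervalIntegral.integral_finset_sum]
    · refine Finset.sum_congr rfl fun i _ => ?_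
      rw [intervalIntegral.integral_finset_sum]
      · exact Finset.sum_congr rfl fun j _ => by
          rw [intervalIntegral.integral_const_mul]
      · intro j _
        exact (continuous_const.mul ((hLc i).mul (hLc j))).intervalIntegrable _ _
    · intro i _
      exact (continuous_finset_sum _ fun j _ =>
        continuous_const.mul ((hLc i).mul (hLc j))).intervalIntegrable _ _
  have hpt : ∀ (a b c d : Fin (N+1) → ℝ) (x : ℝ),
      (∑ i, a i * L i x) * (∑ j, b j * L j x) - (∑ i, c i * L i x) * (∑ j, d j * L j x)
        = ∑ i, ∑ j, (a i * b j - c i * d j) * (L i x * L j x) := by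
    intro a b c d x
    rw [Finset.sum_mul_sum, Finset.sum_mul_sum, ← Finset.sum_sub_distrib]
    refine Finset.sum_congr rfl fun i _ => ?_
    rw [← Finset.sum_sub_distrib]
    exact Finset.sum_congr rfl fun j _ => by ring
  have hint2 : ∀ (a b c d : Fin (N+1) → ℝ),
      (∫ x in (-1:ℝ)..1, ((∑ i, a i * L i x) * (∑ j, b j * L j x)
          - (∑ i, c i * L i x) * (∑ j, d j * L j x)))
        = ∑ i, ∑ j, (a i * b j - c i * d j) * m i j := by
    intro a b c d
    rw [intervalIntegral.integral_congr (g := fun x =>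
        ∑ i, ∑ j, (a i * b j - c i * d j) * (L i x * L j x)) fun x _ => hpt a b c d x]
    exact hexp _
  -- the duality functional
  set E : ℝ → ℝ := fun t =>
    ∑ i, ∑ j, (ut (w i) t * y (w j) t - u (w i) t * yt (w j) t) * m i j with hEdef
  -- continuity of nodal values
  have hcu : ∀ x, ContinuousOn (fun t => u x t) (Set.Icc 0 T) :=
    fun x t ht => (hut x t ht).continuousWithinAt
  have hcut : ∀ x, ContinuousOn (fun t => ut x t) (Set.Icc 0 T) :=
    fun x t ht => (hutt x t ht).continuousWithinAt
  have hcy : ∀ x, ContinuousOn (fun t => y x t) (Set.Icc 0 T) :=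
    fun x t ht => (hyt x t ht).continuousWithinAt
  have hcyt : ∀ x, ContinuousOn (fun t => yt x t) (Set.Icc 0 T) :=
    fun x t ht => (hytt x t ht).continuousWithinAt
  have hEcont : ContinuousOn E (Set.Icc 0 T) := by
    rw [hEdef]
    exact continuousOn_finset_sum _ fun i _ => continuousOn_finset_sum _ fun j _ =>
      ((((hcut _).mul (hcy _)).sub ((hcu _).mul (hcyt _))).mul continuousOn_const)
  have hET : E T = 0 := by
    have h1 : ∀ j : Fin (N+1), y (w j) T = 0 := fun j => (hyfinal (w j)).1
    have h2 : ∀ j : Fin (N+1), yt (w j) T = 0 := fun j => (hyfinal (w j)).2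
    simp [hEdef, h1, h2]
  have hE0 : E 0 = ∫ x in (-1:ℝ)..1, (ut x 0 * y x 0 - u x 0 * yt x 0) := by
    have hrw : ∀ x : ℝ, ut x 0 * y x 0 - u x 0 * yt x 0
        = (∑ i, ut (w i) 0 * L i x) * (∑ j, y (w j) 0 * L j x)
          - (∑ i, u (w i) 0 * L i x) * (∑ j, yt (w j) 0 * L j x) := by
      intro x
      rw [hutrep 0 h0T x, hyrep 0 h0T x, hurep 0 h0T x, hytrep 0 h0T x]
    rw [intervalIntegral.integral_congr (g := fun x =>
        (∑ i, ut (w i) 0 * L i x) * (∑ j, y (w j) 0 * L j x)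
          - (∑ i, u (w i) 0 * L i x) * (∑ j, yt (w j) 0 * L j x)) fun x _ => hrw x]
    exact (hint2 _ _ _ _).symm
  -- spatial derivative formula for u at 1
  have hderiv1 : ∀ t ∈ Set.Icc (0:ℝ) T, deriv (fun ξ => u ξ t) 1
      = ∑ i, u (w i) t * (Lagrange.basis Finset.univ w i).derivative.eval 1 := by
    intro t ht
    have h1 : (fun ξ => u ξ t) = fun ξ => ∑ i, u (w i) t * L i ξ :=
      funext fun ξ => hurep t ht ξ
    rw [h1]
    exact (HasDerivAt.fun_sum fun i _ => (hLd i 1).const_mul (u (w i) t)).deriv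
  -- continuity of the boundary functional
  have hfc : ContinuousOn
      (fun t => v t * (-(deriv (fun ξ => u ξ t) 1) + γ * (N:ℝ)^2 * u 1 t))
      (Set.Icc 0 T) := by
    refine hv.mul (ContinuousOn.add (ContinuousOn.neg ?_) (continuousOn_const.mul (hcu 1)))
    refine ContinuousOn.congr
      (f := fun t => ∑ i : Fin (N+1),
        u (w i) t * (Lagrange.basis Finset.univ w i).derivative.eval 1)
      (continuousOn_finset_sum _ fun i _ => (hcu (w i)).mul continuousOn_const) ?_
    intro t ht
    exact hderiv1 t ht
  -- the pairing identity from the two weak formulations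
  have hAC : ∀ t ∈ Set.Icc (0:ℝ) T,
      (∫ x in (-1:ℝ)..1, (utt x t * y x t - u x t * ytt x t))
        = -(v t * (-(deriv (fun ξ => u ξ t) 1) + γ * (N:ℝ)^2 * u 1 t)) := by
    intro t ht
    obtain ⟨φ, hφd, hφ1, hφe⟩ := hupoly t ht
    obtain ⟨ψ, hψd, hψ1, hψe⟩ := hypoly t ht
    have hud : ∀ x : ℝ, deriv (fun ξ => u ξ t) x = φ.derivative.eval x := by
      intro x
      have : (fun ξ => u ξ t) = fun ξ => φ.eval ξ := funext fun ξ => hφe ξ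
      rw [this, Polynomial.deriv]
    have hyd : ∀ x : ℝ, deriv (fun ξ => y ξ t) x = ψ.derivative.eval x := by
      intro x
      have : (fun ξ => y ξ t) = fun ξ => ψ.eval ξ := funext fun ξ => hψe ξ
      rw [this, Polynomial.deriv]
    have h1 := hweaku ψ hψd hψ1 t ht
    have h2 := hweaky φ hφd hφ1 t ht
    have e1 : (∫ x in (-1:ℝ)..1, utt x t * ψ.eval x)
        = ∫ x in (-1:ℝ)..1, utt x t * y x t :=
      intervalIntegral.integral_congr fun x _ => by rw [hψe x]
    have e2 : (∫ x in (-1:ℝ)..1, ytt x t * φ.eval x)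
        = ∫ x in (-1:ℝ)..1, ytt x t * u x t :=
      intervalIntegral.integral_congr fun x _ => by rw [hφe x]
    have e3 : (∫ x in (-1:ℝ)..1, deriv (fun ξ => y ξ t) x * φ.derivative.eval x)
        = ∫ x in (-1:ℝ)..1, deriv (fun ξ => u ξ t) x * ψ.derivative.eval x :=
      intervalIntegral.integral_congr fun x _ => by rw [hud x, hyd x]; ring
    rw [e1] at h1
    rw [e2, e3] at h2
    -- integrability for splitting the integral
    have i1 : IntervalIntegrable (fun x => utt x t * y x t) volume (-1) 1 := by
      have : (fun x => utt x t * y x t)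
          = fun x => (∑ i, utt (w i) t * L i x) * ψ.eval x :=
        funext fun x => by rw [huttrep t ht x, hψe x]
      rw [this]
      exact ((continuous_finset_sum _ fun i _ =>
        continuous_const.mul (hLc i)).mul ψ.continuous).intervalIntegrable _ _
    have i2 : IntervalIntegrable (fun x => u x t * ytt x t) volume (-1) 1 := by
      have : (fun x => u x t * ytt x t)
          = fun x => φ.eval x * (∑ i, ytt (w i) t * L i x) :=
        funext fun x => by rw [hyttrep t ht x, hφe x]
      rw [this]
      exact (φ.continuous.mul (continuous_finset_sum _ fun i _ =>
        continuous_const.mul (hLc i))).intervalIntegrable _ _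
    have isub : (∫ x in (-1:ℝ)..1, (utt x t * y x t - u x t * ytt x t))
        = (∫ x in (-1:ℝ)..1, utt x t * y x t) - (∫ x in (-1:ℝ)..1, u x t * ytt x t) :=
      intervalIntegral.integral_sub i1 i2
    have e4 : (∫ x in (-1:ℝ)..1, u x t * ytt x t)
        = ∫ x in (-1:ℝ)..1, ytt x t * u x t :=
      intervalIntegral.integral_congr fun x _ => mul_comm _ _
    rw [hud 1, hφe 1] at h1
    rw [hyd 1, hψe 1] at h2
    rw [isub, e4, hud 1, hφe 1]
    ring_nf at h1 h2 ⊢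
    linarith [h1, h2]
  -- derivative of E
  have hEval : ∀ t ∈ Set.Icc (0:ℝ) T,
      (∫ x in (-1:ℝ)..1, (utt x t * y x t - u x t * ytt x t))
        = ∑ i, ∑ j, (utt (w i) t * y (w j) t - u (w i) t * ytt (w j) t) * m i j := by
    intro t ht
    have hrw : ∀ x : ℝ, utt x t * y x t - u x t * ytt x t
        = (∑ i, utt (w i) t * L i x) * (∑ j, y (w j) t * L j x)
          - (∑ i, u (w i) t * L i x) * (∑ j, ytt (w j) t * L j x) := by
      intro x
      rw [huttrep t ht x, hyrep t ht x, hurep t ht x, hyttrep t ht x]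
    rw [intervalIntegral.integral_congr (g := fun x =>
        (∑ i, utt (w i) t * L i x) * (∑ j, y (w j) t * L j x)
          - (∑ i, u (w i) t * L i x) * (∑ j, ytt (w j) t * L j x)) fun x _ => hrw x]
    exact hint2 _ _ _ _
  have hEd : ∀ t ∈ Set.Ioo (0:ℝ) T, HasDerivAt E
      (∑ i, ∑ j, (utt (w i) t * y (w j) t - u (w i) t * ytt (w j) t) * m i j) t := by
    intro t ht
    have hmem : Set.Icc (0:ℝ) T ∈ nhds t := Icc_mem_nhds ht.1 ht.2
    have hti : t ∈ Set.Icc (0:ℝ) T := Set.Ioo_subset_Icc_self ht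
    rw [hEdef]
    refine HasDerivAt.fun_sum fun i _ => HasDerivAt.fun_sum fun j _ => ?_
    have h1 : HasDerivAt (fun τ => ut (w i) τ) (utt (w i) t) t :=
      (hutt (w i) t hti).hasDerivAt hmem
    have h2 : HasDerivAt (fun τ => y (w j) τ) (yt (w j) t) t :=
      (hyt (w j) t hti).hasDerivAt hmem
    have h3 : HasDerivAt (fun τ => u (w i) τ) (ut (w i) t) t :=
      (hut (w i) t hti).hasDerivAt hmem
    have h4 : HasDerivAt (fun τ => yt (w j) τ) (ytt (w j) t) t :=
      (hytt (w j) t hti).hasDerivAt hmem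
    have h := ((h1.mul h2).sub (h3.mul h4)).mul_const (m i j)
    exact h.congr_deriv (by ring)
  -- FTC
  set g' : ℝ → ℝ :=
    fun t => -(v t * (-(deriv (fun ξ => u ξ t) 1) + γ * (N:ℝ)^2 * u 1 t)) with hg'def
  have hder : ∀ t ∈ Set.Ioo (0:ℝ) T, HasDerivWithinAt E (g' t) (Set.Ioi t) t := by
    intro t ht
    have hti : t ∈ Set.Icc (0:ℝ) T := Set.Ioo_subset_Icc_self ht
    have h := (hEd t ht).hasDerivWithinAt (s := Set.Ioi t)
    rw [hg'def]
    simp only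
    rw [← hAC t hti, hEval t hti]
    exact h
  have hint : IntervalIntegrable g' volume 0 T := by
    rw [hg'def]
    exact (hfc.neg.intervalIntegrable_of_Icc hT.le)
  have hFTC := intervalIntegral.integral_eq_sub_of_hasDeriv_right_of_le hT.le hEcont hder hint
  rw [hg'def] at hFTC
  rw [intervalIntegral.integral_neg] at hFTC
  have : (∫ t in (0:ℝ)..T, v t * (-(deriv (fun ξ => u ξ t) 1) + γ * (N:ℝ)^2 * u 1 t))
      = E 0 := by
    rw [hET] at hFTC
    linarith
  rw [this, hE0]
end

section
/- Block upper-triangular matrix exponential formula: let A₁₁ be an m×m real matrix, A₂₂ an n×n real matrix, and A₁₂ an m×n real matrix, and for t ∈ ℝ write exp( t·[[A₁₁, A₁₂],[0, A₂₂]] ) = [[F₁₁(t), F₁₂(t)],[0, F₂₂(t)]]. Then F₁₁(t) = exp(t·A₁₁), F₂₂(t) = exp(t·A₂₂), and F₁₂(t) = ∫_0^t exp((t−s)·A₁₁)·A₁₂·exp(s·A₂₂) ds. -/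
open Matrix MeasureTheory

/-- Block upper-triangular matrix exponential formula: writing
`exp(t·[[A₁₁, A₁₂],[0, A₂₂]]) = [[F₁₁(t), F₁₂(t)],[0, F₂₂(t)]]`, one has
`F₁₁(t) = exp(t·A₁₁)`, `F₂₂(t) = exp(t·A₂₂)` and
`F₁₂(t) = ∫_0^t exp((t−s)·A₁₁)·A₁₂·exp(s·A₂₂) ds` (entrywise integral). -/
theorem block_triangular_matrix_exponential
    (m n : ℕ) (A₁₁ : Matrix (Fin m) (Fin m) ℝ) (A₂₂ : Matrix (Fin n) (Fin n) ℝ)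
    (A₁₂ : Matrix (Fin m) (Fin n) ℝ) :
    ∀ t : ℝ,
      NormedSpace.exp (t • Matrix.fromBlocks A₁₁ A₁₂ 0 A₂₂)
        = Matrix.fromBlocks
            (NormedSpace.exp (t • A₁₁))
            (Matrix.of fun i j => ∫ s in (0 : ℝ)..t,
              (NormedSpace.exp ((t - s) • A₁₁) * A₁₂ * NormedSpace.exp (s • A₂₂)) i j)
            0
            (NormedSpace.exp (t • A₂₂)) := by
  intro t
  letI : NormedAddCommGroup (Matrix (Fin m) (Fin n) ℝ) := Matrix.linftyOpNormedAddCommGroup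
  letI : NormedSpace ℝ (Matrix (Fin m) (Fin n) ℝ) := Matrix.linftyOpNormedSpace
  letI : SeminormedRing (Matrix (Fin m) (Fin m) ℝ) := Matrix.linftyOpSemiNormedRing
  letI : NormedRing (Matrix (Fin m) (Fin m) ℝ) := Matrix.linftyOpNormedRing
  letI : NormedAlgebra ℝ (Matrix (Fin m) (Fin m) ℝ) := Matrix.linftyOpNormedAlgebra
  letI : NormedAlgebra ℚ (Matrix (Fin m) (Fin m) ℝ) := NormedAlgebra.restrictScalars ℚ ℝ _
  letI : SeminormedRing (Matrix (Fin n) (Fin n) ℝ) := Matrix.linftyOpSemiNormedRing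
  letI : NormedRing (Matrix (Fin n) (Fin n) ℝ) := Matrix.linftyOpNormedRing
  letI : NormedAlgebra ℝ (Matrix (Fin n) (Fin n) ℝ) := Matrix.linftyOpNormedAlgebra
  letI : NormedAlgebra ℚ (Matrix (Fin n) (Fin n) ℝ) := NormedAlgebra.restrictScalars ℚ ℝ _
  letI : SeminormedRing (Matrix (Fin m ⊕ Fin n) (Fin m ⊕ Fin n) ℝ) :=
    Matrix.linftyOpSemiNormedRing
  letI : NormedRing (Matrix (Fin m ⊕ Fin n) (Fin m ⊕ Fin n) ℝ) := Matrix.linftyOpNormedRing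
  letI : NormedAlgebra ℝ (Matrix (Fin m ⊕ Fin n) (Fin m ⊕ Fin n) ℝ) :=
    Matrix.linftyOpNormedAlgebra
  letI : NormedAlgebra ℚ (Matrix (Fin m ⊕ Fin n) (Fin m ⊕ Fin n) ℝ) :=
    NormedAlgebra.restrictScalars ℚ ℝ _
  set X : ℝ → Matrix (Fin m) (Fin m) ℝ := fun u => NormedSpace.exp (u • A₁₁) with hX
  set Z : ℝ → Matrix (Fin n) (Fin n) ℝ := fun u => NormedSpace.exp (u • A₂₂) with hZ
  set g : ℝ → Matrix (Fin m) (Fin n) ℝ :=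
    fun s => NormedSpace.exp (s • (-A₁₁)) * A₁₂ * NormedSpace.exp (s • A₂₂) with hg
  have contg : Continuous g :=
    ((NormedSpace.exp_continuous.comp (continuous_id.smul continuous_const)).matrix_mul
      continuous_const).matrix_mul
      (NormedSpace.exp_continuous.comp (continuous_id.smul continuous_const))
  set J : ℝ → Matrix (Fin m) (Fin n) ℝ := fun u => ∫ s in (0:ℝ)..u, g s with hJdef
  have hJ : ∀ u : ℝ, HasDerivAt J (g u) u := fun u =>
    (contg.integral_hasStrictDerivAt 0 u).hasDerivAt
  -- cancellation lemma
  have cancel : ∀ {ι : Type} [Fintype ι] [DecidableEq ι] (C : Matrix ι ι ℝ) (u : ℝ),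
      NormedSpace.exp (u • C) * NormedSpace.exp (u • (-C)) = 1 := by
    intro ι _ _ C u
    rw [← Matrix.exp_add_of_commute (u • C) (u • (-C))
      (by rw [smul_neg]; exact (Commute.refl (u • C)).neg_right)]
    simp [NormedSpace.exp_zero]
  -- left multiplication CLM
  let lmul₀ : Matrix (Fin m) (Fin m) ℝ →ₗ[ℝ]
      (Matrix (Fin m) (Fin n) ℝ →ₗ[ℝ] Matrix (Fin m) (Fin n) ℝ) :=
    { toFun := fun P =>
        { toFun := fun Y => P * Y
          map_add' := fun Y₁ Y₂ => Matrix.mul_add P Y₁ Y₂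
          map_smul' := fun c Y => by simp [Matrix.mul_smul] }
      map_add' := fun P₁ P₂ => LinearMap.ext fun Y => Matrix.add_mul P₁ P₂ Y
      map_smul' := fun c P => LinearMap.ext fun Y => by simp [Matrix.smul_mul] }
  let Φ : Matrix (Fin m) (Fin m) ℝ →L[ℝ]
      (Matrix (Fin m) (Fin n) ℝ →L[ℝ] Matrix (Fin m) (Fin n) ℝ) :=
    LinearMap.toContinuousLinearMap
      (((LinearMap.toContinuousLinearMap :
          (Matrix (Fin m) (Fin n) ℝ →ₗ[ℝ] Matrix (Fin m) (Fin n) ℝ) ≃ₗ[ℝ]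
          (Matrix (Fin m) (Fin n) ℝ →L[ℝ] Matrix (Fin m) (Fin n) ℝ)).toLinearMap).comp lmul₀)
  have hΦ : ∀ P Y, Φ P Y = P * Y := fun _ _ => rfl
  set K : ℝ → Matrix (Fin m) (Fin n) ℝ := fun u => X u * J u with hKdef
  have hK : ∀ u : ℝ, HasDerivAt K (A₁₁ * K u + A₁₂ * Z u) u := by
    intro u
    have hB : IsBoundedBilinearMap ℝ
        (fun p : Matrix (Fin m) (Fin m) ℝ × Matrix (Fin m) (Fin n) ℝ => p.1 * p.2) :=
      { add_left := fun x₁ x₂ y => Matrix.add_mul x₁ x₂ y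
        smul_left := fun c x y => Matrix.smul_mul c x y
        add_right := fun x y₁ y₂ => Matrix.mul_add x y₁ y₂
        smul_right := fun c x y => Matrix.mul_smul x c y
        bound := ⟨1, one_pos, fun x y => by rw [one_mul]; exact Matrix.linfty_opNorm_mul x y⟩ }
    have h4 : HasDerivAt X (A₁₁ * X u) u := hasDerivAt_exp_smul_const' A₁₁ u
    have h : HasDerivAt K (hB.deriv (X u, J u) (A₁₁ * X u, g u)) u := by
      have h5 := (hB.hasFDerivAt (X u, J u)).comp_hasDerivAt u (h4.prodMk (hJ u))
      exact h5
    have h2 : X u * g u = A₁₂ * Z u := by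
      rw [hg, hX, hZ, ← Matrix.mul_assoc, ← Matrix.mul_assoc, cancel, Matrix.one_mul]
    have hd : hB.deriv (X u, J u) (A₁₁ * X u, g u) = A₁₁ * K u + A₁₂ * Z u := by
      rw [IsBoundedBilinearMap.deriv_apply]
      dsimp only
      rw [← h2, Matrix.mul_assoc]
      exact add_comm _ _
    exact hd ▸ h
  -- fromBlocks CLM
  let ψ₀ : (Matrix (Fin m) (Fin m) ℝ × Matrix (Fin m) (Fin n) ℝ × Matrix (Fin n) (Fin n) ℝ)
      →ₗ[ℝ] Matrix (Fin m ⊕ Fin n) (Fin m ⊕ Fin n) ℝ :=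
    { toFun := fun p => Matrix.fromBlocks p.1 p.2.1 0 p.2.2
      map_add' := fun p q => by ext (i | i) (j | j) <;> simp [Matrix.fromBlocks]
      map_smul' := fun c p => by ext (i | i) (j | j) <;> simp [Matrix.fromBlocks] }
  let Ψ := LinearMap.toContinuousLinearMap ψ₀
  have hΨ : ∀ p, Ψ p = Matrix.fromBlocks p.1 p.2.1 0 p.2.2 := fun _ => rfl
  set M : Matrix (Fin m ⊕ Fin n) (Fin m ⊕ Fin n) ℝ := Matrix.fromBlocks A₁₁ A₁₂ 0 A₂₂ with hM
  set G : ℝ → Matrix (Fin m ⊕ Fin n) (Fin m ⊕ Fin n) ℝ :=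
    fun u => Matrix.fromBlocks (X u) (K u) 0 (Z u) with hGdef
  have hG : ∀ u : ℝ, HasDerivAt G (M * G u) u := by
    intro u
    have hprod : HasDerivAt (fun v : ℝ => (X v, K v, Z v))
        (A₁₁ * X u, A₁₁ * K u + A₁₂ * Z u, A₂₂ * Z u) u :=
      (hasDerivAt_exp_smul_const' A₁₁ u).prodMk
        ((hK u).prodMk (hasDerivAt_exp_smul_const' A₂₂ u))
    have h : HasDerivAt G (Ψ (A₁₁ * X u, A₁₁ * K u + A₁₂ * Z u, A₂₂ * Z u)) u :=
      Ψ.hasFDerivAt.comp_hasDerivAt u hprod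
    convert h using 1
    rw [hΨ, hM, hGdef, Matrix.fromBlocks_multiply]
    simp
  -- uniqueness
  have hH : ∀ u : ℝ, HasDerivAt (fun v : ℝ => NormedSpace.exp (v • (-M)) * G v) 0 u := by
    intro u
    have h : HasDerivAt (fun v : ℝ => NormedSpace.exp (v • (-M)) * G v)
        (-M * NormedSpace.exp (u • (-M)) * G u + NormedSpace.exp (u • (-M)) * (M * G u)) u :=
      (hasDerivAt_exp_smul_const' (-M) u).mul (hG u)
    convert h using 1
    have hcomm : NormedSpace.exp (u • (-M)) * M = M * NormedSpace.exp (u • (-M)) :=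
      ((Commute.refl M).neg_left.smul_left u).exp_left
    rw [← Matrix.mul_assoc, hcomm]
    simp [Matrix.mul_assoc]
  have hconst : ∀ u : ℝ, NormedSpace.exp (u • (-M)) * G u
      = NormedSpace.exp ((0:ℝ) • (-M)) * G 0 :=
    fun u => is_const_of_deriv_eq_zero (fun x => (hH x).differentiableAt)
      (fun x => (hH x).deriv) u 0
  have hG0 : G 0 = 1 := by
    rw [hGdef]
    simp only [hKdef, hJdef, intervalIntegral.integral_same, Matrix.mul_zero, hX, hZ,
      zero_smul, NormedSpace.exp_zero]
    exact Matrix.fromBlocks_one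
  have key : NormedSpace.exp (t • (-M)) * G t = 1 := by
    rw [hconst t, hG0, Matrix.mul_one, zero_smul, NormedSpace.exp_zero]
  have c2 : NormedSpace.exp (t • M) * NormedSpace.exp (t • (-M)) = 1 := cancel M t
  have hexp : NormedSpace.exp (t • M) = G t := by
    calc NormedSpace.exp (t • M)
        = NormedSpace.exp (t • M) * (NormedSpace.exp (t • (-M)) * G t) := by
          rw [key, Matrix.mul_one]
      _ = (NormedSpace.exp (t • M) * NormedSpace.exp (t • (-M))) * G t :=
          (Matrix.mul_assoc _ _ _).symm
      _ = 1 * G t := by rw [c2]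
      _ = G t := Matrix.one_mul _
  -- identify K with the entrywise integral
  have hKint : K t = Matrix.of fun i j => ∫ s in (0:ℝ)..t,
      (NormedSpace.exp ((t - s) • A₁₁) * A₁₂ * NormedSpace.exp (s • A₂₂)) i j := by
    letI : ENormedAddMonoid (Matrix (Fin m) (Fin n) ℝ) := NormedAddGroup.toENormedAddMonoid
    have hint : IntervalIntegrable g volume 0 t := contg.intervalIntegrable 0 t
    have h1 : K t = ∫ s in (0:ℝ)..t, X t * g s := by
      rw [hKdef]
      have := (Φ (X t)).intervalIntegral_comp_comm hint
      exact this.symm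
    have h2 : ∀ s : ℝ, X t * g s
        = NormedSpace.exp ((t - s) • A₁₁) * A₁₂ * NormedSpace.exp (s • A₂₂) := by
      intro s
      rw [hX, hg, ← Matrix.mul_assoc, ← Matrix.mul_assoc]
      congr 2
      have hsum : (t - s) • A₁₁ = t • A₁₁ + s • (-A₁₁) := by
        rw [smul_neg, ← neg_smul, ← add_smul, sub_eq_add_neg]
      rw [hsum, Matrix.exp_add_of_commute (t • A₁₁) (s • (-A₁₁))
        (((Commute.refl A₁₁).neg_right.smul_right s).smul_left t)]

    have h3 : K t = ∫ s in (0:ℝ)..t,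
        NormedSpace.exp ((t - s) • A₁₁) * A₁₂ * NormedSpace.exp (s • A₂₂) := by
      rw [h1]; congr 1; funext s; exact h2 s
    -- entrywise
    ext i j
    rw [Matrix.of_apply, h3]
    let e : Matrix (Fin m) (Fin n) ℝ →L[ℝ] ℝ :=
      LinearMap.toContinuousLinearMap
        { toFun := fun Y => Y i j
          map_add' := fun _ _ => rfl
          map_smul' := fun _ _ => rfl }
    have hint2 : IntervalIntegrable
        (fun s : ℝ => NormedSpace.exp ((t - s) • A₁₁) * A₁₂ * NormedSpace.exp (s • A₂₂))
        volume 0 t := by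
      apply Continuous.intervalIntegrable
      exact ((NormedSpace.exp_continuous.comp
          ((continuous_const.sub continuous_id).smul continuous_const)).matrix_mul
        continuous_const).matrix_mul
        (NormedSpace.exp_continuous.comp (continuous_id.smul continuous_const))
    exact (e.intervalIntegral_comp_comm hint2).symm
  have final : NormedSpace.exp (t • M)
      = Matrix.fromBlocks (X t) (Matrix.of fun i j => ∫ s in (0 : ℝ)..t,
          (NormedSpace.exp ((t - s) • A₁₁) * A₁₂ * NormedSpace.exp (s • A₂₂)) i j)
          0 (Z t) := by
    rw [hexp]
    have hGt : G t = Matrix.fromBlocks (X t) (K t) 0 (Z t) := rfl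
    rw [hGt, hKint]
  exact final
end

section
/- Gramian representation of the observation integral and its computation via a block exponential: let A be an n×n real matrix, c ∈ ℝⁿ, T ≥ 0, and define the Gramian W(T) = ∫_0^T exp(Aᵀt)·c cᵀ·exp(At) dt. Then (i) for every x ∈ ℝⁿ, ∫_0^T (⟨c, exp(At)x⟩)² dt = ⟨x, W(T)x⟩; and (ii) writing exp( T·[[−Aᵀ, c cᵀ],[0, A]] ) = [[F₁₁, F₁₂],[0, F₂₂]], one has W(T) = F₂₂ᵀ·F₁₂. -/
open Matrix MeasureTheory NormedSpace

section Aux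

lemma ode_exp_unique {𝔸 : Type*} [NormedRing 𝔸] [NormedAlgebra ℝ 𝔸] [CompleteSpace 𝔸]
    (B : 𝔸) (F : ℝ → 𝔸) (hF : ∀ t, HasDerivAt F (B * F t) t) (h0 : F 0 = 1) (t : ℝ) :
    F t = NormedSpace.exp (t • B) := by
  have hd : ∀ s : ℝ, HasDerivAt (fun u => NormedSpace.exp (u • (-B)) * F u) 0 s := by
    intro s
    have h1 := hasDerivAt_exp_smul_const (𝕂 := ℝ) (-B) s
    have h2 := h1.mul (hF s)
    convert h2 using 1
    · rfl
    · rw [mul_assoc, ← mul_add, neg_mul, neg_add_cancel, mul_zero]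
  have hconst : ∀ s : ℝ, NormedSpace.exp (s • (-B)) * F s = NormedSpace.exp ((0:ℝ) • (-B)) * F 0 :=
    fun s => is_const_of_deriv_eq_zero (fun u => (hd u).differentiableAt)
      (fun u => (hd u).deriv) s 0
  have hts : NormedSpace.exp (t • (-B)) * F t = 1 := by
    rw [hconst t, zero_smul, exp_zero, one_mul, h0]
  have hinv : NormedSpace.exp (t • B) * NormedSpace.exp (t • (-B)) = 1 := by
    rw [← NormedSpace.exp_add_of_commute_of_mem_ball (𝕂 := ℝ)
      (((Commute.refl B).neg_right).smul_left t |>.smul_right t)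
      ((NormedSpace.expSeries_radius_eq_top ℝ 𝔸).symm ▸ edist_lt_top _ _)
      ((NormedSpace.expSeries_radius_eq_top ℝ 𝔸).symm ▸ edist_lt_top _ _)]
    simp
  calc F t = (NormedSpace.exp (t • B) * NormedSpace.exp (t • (-B))) * F t := by rw [hinv, one_mul]
    _ = NormedSpace.exp (t • B) * (NormedSpace.exp (t • (-B)) * F t) := by rw [mul_assoc]
    _ = NormedSpace.exp (t • B) := by rw [hts, mul_one]

lemma vecMulVec_mulVec' {n : ℕ} (c v : Fin n → ℝ) :
    (Matrix.vecMulVec c c).mulVec v = (c ⬝ᵥ v) • c := by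
  funext i
  simp [Matrix.mulVec, Matrix.vecMulVec_apply, dotProduct, Finset.mul_sum, mul_assoc,
    mul_comm, mul_left_comm]

lemma quad_form_eq {n : ℕ} (B : Matrix (Fin n) (Fin n) ℝ) (c x : Fin n → ℝ) :
    x ⬝ᵥ (Bᵀ * Matrix.vecMulVec c c * B).mulVec x = (c ⬝ᵥ B.mulVec x) ^ 2 := by
  rw [← Matrix.mulVec_mulVec, ← Matrix.mulVec_mulVec, Matrix.dotProduct_mulVec,
    Matrix.vecMul_transpose, vecMulVec_mulVec', dotProduct_smul, dotProduct_comm]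
  rw [smul_eq_mul, sq]

lemma integral_quad {n : ℕ} {T : ℝ} (f : ℝ → Matrix (Fin n) (Fin n) ℝ)
    (hf : ∀ i j, IntervalIntegrable (fun t => f t i j) volume 0 T) (x : Fin n → ℝ) :
    (∫ t in (0:ℝ)..T, x ⬝ᵥ (f t).mulVec x)
      = x ⬝ᵥ (Matrix.of fun i j => ∫ t in (0:ℝ)..T, f t i j).mulVec x := by
  have h1 : ∀ i : Fin n, IntervalIntegrable (fun t => ∑ j, f t i j * x j) volume 0 T := by
    intro i
    have h := IntervalIntegrable.sum (μ := volume) (a := (0:ℝ)) (b := T) Finset.univ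
      (f := fun j t => f t i j * x j) (fun j _ => (hf i j).mul_const (x j))
    simpa [Finset.sum_fn] using h
  simp only [dotProduct, Matrix.mulVec, Matrix.of_apply]
  rw [intervalIntegral.integral_finset_sum (fun i _ => (h1 i).const_mul (x i))]
  refine Finset.sum_congr rfl fun i _ => ?_
  rw [intervalIntegral.integral_const_mul]
  refine congrArg _ ?_
  rw [intervalIntegral.integral_finset_sum (fun j _ => (hf i j).mul_const (x j))]
  exact Finset.sum_congr rfl fun j _ => intervalIntegral.integral_mul_const _ _

variable {l m : Type*} [Fintype l] [Fintype m] [DecidableEq l] [DecidableEq m]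

def entryLM (i j : l) : Matrix l l ℝ →ₗ[ℝ] ℝ where
  toFun M := M i j
  map_add' _ _ := rfl
  map_smul' _ _ := rfl

def blocksLM₁₂ : Matrix (l ⊕ m) (l ⊕ m) ℝ →ₗ[ℝ] Matrix l m ℝ where
  toFun := Matrix.toBlocks₁₂
  map_add' _ _ := rfl
  map_smul' _ _ := rfl

def blocksLM₂₂ : Matrix (l ⊕ m) (l ⊕ m) ℝ →ₗ[ℝ] Matrix m m ℝ where
  toFun := Matrix.toBlocks₂₂
  map_add' _ _ := rfl
  map_smul' _ _ := rfl

def transLM : Matrix l m ℝ →ₗ[ℝ] Matrix m l ℝ where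
  toFun := Matrix.transpose
  map_add' _ _ := rfl
  map_smul' _ _ := rfl

end Aux

set_option maxHeartbeats 1000000 in
/-- Gramian representation of the observation integral and its computation via
a block exponential: with `W(T) = ∫_0^T exp(Aᵀt)·c cᵀ·exp(At) dt` (entrywise),
(i) `∫_0^T ⟨c, exp(At)x⟩² dt = ⟨x, W(T)x⟩` for all `x`, and
(ii) writing `exp(T·[[−Aᵀ, c cᵀ],[0, A]]) = [[F₁₁, F₁₂],[0, F₂₂]]`, one has
`W(T) = F₂₂ᵀ·F₁₂`. -/
theorem gramian_representation_and_block_exponential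
    (n : ℕ) (A : Matrix (Fin n) (Fin n) ℝ) (c : Fin n → ℝ) (T : ℝ) (hT : 0 ≤ T) :
    (∀ x : Fin n → ℝ,
        (∫ t in (0 : ℝ)..T, (c ⬝ᵥ (NormedSpace.exp (t • A)).mulVec x) ^ 2)
          = x ⬝ᵥ (Matrix.of fun i j => ∫ t in (0 : ℝ)..T,
              (NormedSpace.exp (t • Aᵀ) * Matrix.vecMulVec c c *
                NormedSpace.exp (t • A)) i j).mulVec x)
    ∧ (Matrix.of fun i j => ∫ t in (0 : ℝ)..T,
          (NormedSpace.exp (t • Aᵀ) * Matrix.vecMulVec c c *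
            NormedSpace.exp (t • A)) i j)
        = ((NormedSpace.exp
              (T • Matrix.fromBlocks (-Aᵀ) (Matrix.vecMulVec c c) 0 A)).toBlocks₂₂)ᵀ *
            (NormedSpace.exp
              (T • Matrix.fromBlocks (-Aᵀ) (Matrix.vecMulVec c c) 0 A)).toBlocks₁₂ := by
  letI : NormedRing (Matrix (Fin n) (Fin n) ℝ) := Matrix.linftyOpNormedRing
  letI : NormedAlgebra ℝ (Matrix (Fin n) (Fin n) ℝ) := Matrix.linftyOpNormedAlgebra
  letI : NormedRing (Matrix (Fin n ⊕ Fin n) (Fin n ⊕ Fin n) ℝ) := Matrix.linftyOpNormedRing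
  letI : NormedAlgebra ℝ (Matrix (Fin n ⊕ Fin n) (Fin n ⊕ Fin n) ℝ) :=
    Matrix.linftyOpNormedAlgebra
  haveI : CompleteSpace (Matrix (Fin n) (Fin n) ℝ) := FiniteDimensional.complete ℝ _
  haveI : CompleteSpace (Matrix (Fin n ⊕ Fin n) (Fin n ⊕ Fin n) ℝ) :=
    FiniteDimensional.complete ℝ _
  letI : TopologicalSpace (Matrix (Fin n) (Fin n) ℝ) :=
    @UniformSpace.toTopologicalSpace _ (@PseudoMetricSpace.toUniformSpace _
      (@SeminormedRing.toPseudoMetricSpace _ (@NormedRing.toSeminormedRing _ Matrix.linftyOpNormedRing)))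
  letI : TopologicalSpace (Matrix (Fin n ⊕ Fin n) (Fin n ⊕ Fin n) ℝ) :=
    @UniformSpace.toTopologicalSpace _ (@PseudoMetricSpace.toUniformSpace _
      (@SeminormedRing.toPseudoMetricSpace _ (@NormedRing.toSeminormedRing _ Matrix.linftyOpNormedRing)))
  set C : Matrix (Fin n) (Fin n) ℝ := Matrix.vecMulVec c c with hC
  set f : ℝ → Matrix (Fin n) (Fin n) ℝ := fun t => NormedSpace.exp (t • Aᵀ) * C * NormedSpace.exp (t • A)
    with hf
  -- continuity
  have hcexp : ∀ (X : Matrix (Fin n) (Fin n) ℝ), Continuous fun t : ℝ => NormedSpace.exp (t • X) :=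
    fun X => continuous_iff_continuousAt.2 fun t => (hasDerivAt_exp_smul_const X t).continuousAt
  have hfc : Continuous f := ((hcexp Aᵀ).mul continuous_const).mul (hcexp A)
  have hfint : IntervalIntegrable f volume 0 T := hfc.intervalIntegrable 0 T
  have hfentry : ∀ i j : Fin n, IntervalIntegrable (fun t => f t i j) volume 0 T := by
    intro i j
    exact (((entryLM i j).toContinuousLinearMap.continuous).comp hfc).intervalIntegrable 0 T
  -- the entrywise integral matrix equals the Bochner integral
  have hWeq : (Matrix.of fun i j => ∫ t in (0:ℝ)..T, f t i j)
      = ∫ t in (0:ℝ)..T, f t := by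
    ext i j
    exact (entryLM i j).toContinuousLinearMap.intervalIntegral_comp_comm hfint
  -- PART (ii)
  set M' : Matrix (Fin n ⊕ Fin n) (Fin n ⊕ Fin n) ℝ :=
    Matrix.fromBlocks (-Aᵀ) C 0 A with hM'
  have hmul12 : ∀ X : Matrix (Fin n ⊕ Fin n) (Fin n ⊕ Fin n) ℝ,
      (M' * X).toBlocks₁₂ = (-Aᵀ) * X.toBlocks₁₂ + C * X.toBlocks₂₂ := by
    intro X
    conv_lhs => rw [← Matrix.fromBlocks_toBlocks X, hM', Matrix.fromBlocks_multiply]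
    rw [Matrix.toBlocks_fromBlocks₁₂]
  have hmul22 : ∀ X : Matrix (Fin n ⊕ Fin n) (Fin n ⊕ Fin n) ℝ,
      (M' * X).toBlocks₂₂ = A * X.toBlocks₂₂ := by
    intro X
    conv_lhs => rw [← Matrix.fromBlocks_toBlocks X, hM', Matrix.fromBlocks_multiply]
    rw [Matrix.toBlocks_fromBlocks₂₂, Matrix.zero_mul, zero_add]
  have hE : ∀ t : ℝ, HasDerivAt (fun u : ℝ => NormedSpace.exp (u • M')) (M' * NormedSpace.exp (t • M')) t :=
    fun t => hasDerivAt_exp_smul_const' M' t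
  have hE0 : NormedSpace.exp ((0:ℝ) • M') = 1 := by rw [zero_smul, exp_zero]
  -- derivative of the 2-2 block
  have hE22d : ∀ t : ℝ, HasDerivAt (fun u : ℝ => (NormedSpace.exp (u • M')).toBlocks₂₂)
      (A * (NormedSpace.exp (t • M')).toBlocks₂₂) t := by
    intro t
    have h := (blocksLM₂₂ (l := Fin n) (m := Fin n)).toContinuousLinearMap.hasFDerivAt.comp_hasDerivAt
      t (hE t)
    replace h := h.congr_deriv (show (blocksLM₂₂ (l := Fin n) (m := Fin n)).toContinuousLinearMap
        (M' * NormedSpace.exp (t • M')) = A * (NormedSpace.exp (t • M')).toBlocks₂₂ from hmul22 _)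
    exact h
  have hE220 : (NormedSpace.exp ((0:ℝ) • M')).toBlocks₂₂ = 1 := by
    rw [hE0, ← Matrix.fromBlocks_one, Matrix.toBlocks_fromBlocks₂₂]
  have hE22 : ∀ t : ℝ, (NormedSpace.exp (t • M')).toBlocks₂₂ = NormedSpace.exp (t • A) :=
    ode_exp_unique A _ hE22d hE220
  -- derivative of the 1-2 block
  have hE12d : ∀ t : ℝ, HasDerivAt (fun u : ℝ => (NormedSpace.exp (u • M')).toBlocks₁₂)
      ((-Aᵀ) * (NormedSpace.exp (t • M')).toBlocks₁₂ + C * (NormedSpace.exp (t • M')).toBlocks₂₂) t := by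
    intro t
    have h := (blocksLM₁₂ (l := Fin n) (m := Fin n)).toContinuousLinearMap.hasFDerivAt.comp_hasDerivAt
      t (hE t)
    replace h := h.congr_deriv (show (blocksLM₁₂ (l := Fin n) (m := Fin n)).toContinuousLinearMap
        (M' * NormedSpace.exp (t • M'))
        = (-Aᵀ) * (NormedSpace.exp (t • M')).toBlocks₁₂ + C * (NormedSpace.exp (t • M')).toBlocks₂₂
        from hmul12 _)
    exact h
  -- derivative of g u = (E u).toBlocks₂₂ᵀ * (E u).toBlocks₁₂
  have hgd : ∀ t : ℝ, HasDerivAt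
      (fun u : ℝ => ((NormedSpace.exp (u • M')).toBlocks₂₂)ᵀ * (NormedSpace.exp (u • M')).toBlocks₁₂)
      (f t) t := by
    intro t
    have htr : HasDerivAt (fun u : ℝ => ((NormedSpace.exp (u • M')).toBlocks₂₂)ᵀ)
        ((A * (NormedSpace.exp (t • M')).toBlocks₂₂)ᵀ) t :=
      (transLM (l := Fin n) (m := Fin n)).toContinuousLinearMap.hasFDerivAt.comp_hasDerivAt
        t (hE22d t)
    have h := htr.mul (hE12d t)
    have heq : (A * (NormedSpace.exp (t • M')).toBlocks₂₂)ᵀ * (NormedSpace.exp (t • M')).toBlocks₁₂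
        + ((NormedSpace.exp (t • M')).toBlocks₂₂)ᵀ *
            ((-Aᵀ) * (NormedSpace.exp (t • M')).toBlocks₁₂ + C * (NormedSpace.exp (t • M')).toBlocks₂₂)
        = f t := by
      rw [hE22 t]; simp only [hf]
      have hexpT : (NormedSpace.exp (t • A))ᵀ = NormedSpace.exp (t • Aᵀ) := by
        rw [← Matrix.transpose_smul]; exact (Matrix.exp_transpose _).symm
      rw [Matrix.transpose_mul, hexpT]
      noncomm_ring
    rw [heq] at h
    exact h
  have hg0 : ((NormedSpace.exp ((0:ℝ) • M')).toBlocks₂₂)ᵀ * (NormedSpace.exp ((0:ℝ) • M')).toBlocks₁₂ = 0 := by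
    rw [hE0, ← Matrix.fromBlocks_one, Matrix.toBlocks_fromBlocks₁₂, Matrix.mul_zero]
  -- FTC derivative of the integral
  have hWd : ∀ t : ℝ, HasDerivAt (fun u : ℝ => ∫ s in (0:ℝ)..u, f s) (f t) t := by
    intro t
    exact intervalIntegral.integral_hasDerivAt_right (hfc.intervalIntegrable 0 t)
      (hfc.stronglyMeasurableAtFilter _ _) hfc.continuousAt
  -- two functions with the same derivative and same value at 0
  have hmain : ∀ t : ℝ, (∫ s in (0:ℝ)..t, f s)
      = ((NormedSpace.exp (t • M')).toBlocks₂₂)ᵀ * (NormedSpace.exp (t • M')).toBlocks₁₂ := by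
    intro t
    have hzd : ∀ u : ℝ, HasDerivAt
        (fun v : ℝ => ((NormedSpace.exp (v • M')).toBlocks₂₂)ᵀ * (NormedSpace.exp (v • M')).toBlocks₁₂
          - ∫ s in (0:ℝ)..v, f s) 0 u := by
      intro u
      exact ((hgd u).sub (hWd u)).congr_deriv (sub_self _)
    have hconst := is_const_of_deriv_eq_zero (fun u => (hzd u).differentiableAt)
      (fun u => (hzd u).deriv) t 0
    have h0' : ((NormedSpace.exp ((0:ℝ) • M')).toBlocks₂₂)ᵀ * (NormedSpace.exp ((0:ℝ) • M')).toBlocks₁₂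
        - ∫ s in (0:ℝ)..(0:ℝ), f s = 0 := by
      rw [hg0, intervalIntegral.integral_same, sub_zero]
    rw [h0'] at hconst
    exact (sub_eq_zero.mp hconst).symm
  refine ⟨fun x => ?_, ?_⟩
  · show (∫ t in (0:ℝ)..T, (c ⬝ᵥ (NormedSpace.exp (t • A)).mulVec x) ^ 2)
      = x ⬝ᵥ (Matrix.of fun i j => ∫ t in (0:ℝ)..T, f t i j).mulVec x
    rw [← integral_quad f hfentry x]
    refine intervalIntegral.integral_congr fun t _ => ?_
    have hq := quad_form_eq (NormedSpace.exp (t • A)) c x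
    have hfe : f t = (NormedSpace.exp (t • A))ᵀ * Matrix.vecMulVec c c * NormedSpace.exp (t • A) := by
      simp only [hf]; rw [← Matrix.transpose_smul, hC]
      exact congrArg (· * _ * _) (Matrix.exp_transpose _)
    rw [hfe, hq]
  · show (Matrix.of fun i j => ∫ t in (0:ℝ)..T, f t i j)
      = ((NormedSpace.exp (T • M')).toBlocks₂₂)ᵀ * (NormedSpace.exp (T • M')).toBlocks₁₂
    rw [hWeq, hmain T]
end
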